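/- arXiv:1703.04841 — 7 statements merged into one kernel-verified Lean document; each statement's English description precedes it below -/
import Mathlib

section
/- Let U and V be k-dimensional subspaces of a Hilbert space H, and let S denote the unit sphere of H. Then max_{u ∈ U ∩ S} min_{v ∈ V ∩ S} ‖u − v‖ = max_{v ∈ V ∩ S} min_{u ∈ U ∩ S} ‖u − v‖; that is, the two one-sided Hausdorff distances between U ∩ S and V ∩ S coincide. -/
open Module Metric ContinuousLinearMap

noncomputable section

/-! Generic real iInf/iSup helpers -/

lemma ciInf_eq_of_min' {ι : Sort*} [Nonempty ι] {f : ι → ℝ} {m : ℝ}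
    (h1 : ∀ i, m ≤ f i) (h2 : ∃ i, f i = m) : (⨅ i, f i) = m := by
  obtain ⟨i, hi⟩ := h2
  exact le_antisymm (hi ▸ ciInf_le ⟨m, Set.forall_mem_range.mpr h1⟩ i) (le_ciInf h1)

lemma ciSup_eq_of_max' {ι : Sort*} [Nonempty ι] {f : ι → ℝ} {m : ℝ}
    (h1 : ∀ i, f i ≤ m) (h2 : ∃ i, f i = m) : (⨆ i, f i) = m := by
  obtain ⟨i, hi⟩ := h2
  exact le_antisymm (ciSup_le h1) (hi ▸ le_ciSup ⟨m, Set.forall_mem_range.mpr h1⟩ i)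

lemma iInf_comp_equiv' {α β : Sort*} (e : α ≃ β) (f : β → ℝ) :
    (⨅ x, f (e x)) = ⨅ y, f y := by
  have h : Set.range (fun x => f (e x)) = Set.range f := e.surjective.range_comp f
  simp only [iInf, h]

section Key

variable {E F : Type*} [NormedAddCommGroup E] [InnerProductSpace ℝ E]
  [NormedAddCommGroup F] [InnerProductSpace ℝ F]

lemma key_le [FiniteDimensional ℝ E] [FiniteDimensional ℝ F] [Nontrivial E] [Nontrivial F]
    (h : finrank ℝ E = finrank ℝ F) (T : E →L[ℝ] F) :
    (⨅ x : sphere (0:E) 1, ‖T x‖) ≤ ⨅ y : sphere (0:F) 1, ‖adjoint T y‖ := by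
  haveI : Nonempty (sphere (0:E) 1) := (NormedSpace.sphere_nonempty.mpr zero_le_one).to_subtype
  haveI : Nonempty (sphere (0:F) 1) := (NormedSpace.sphere_nonempty.mpr zero_le_one).to_subtype
  have bddE : BddBelow (Set.range fun x : sphere (0:E) 1 => ‖T x‖) :=
    ⟨0, Set.forall_mem_range.mpr fun x => norm_nonneg _⟩
  by_cases hker : LinearMap.ker (T : E →ₗ[ℝ] F) = ⊥
  · have hinj : Function.Injective T := LinearMap.ker_eq_bot.mp hker
    have hsurj : Function.Surjective T :=
      (LinearMap.injective_iff_surjective_of_finrank_eq_finrank h).mp hinj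
    set e : E ≃L[ℝ] F :=
      ContinuousLinearEquiv.ofBijective T hker (LinearMap.range_eq_top.mpr hsurj) with he
    have hecoe : ∀ x : E, e x = T x := fun x => rfl
    refine le_ciInf fun y => ?_
    have hy : ‖(y : F)‖ = 1 := mem_sphere_zero_iff_norm.mp y.2
    have hz0 : e.symm (y : F) ≠ 0 := by
      intro h0
      have h1 : (y : F) = 0 := by simpa using congrArg e h0
      rw [h1] at hy; simp at hy
    set z := e.symm (y : F) with hzdef
    have hz : z ≠ 0 := hz0
    have hzn : 0 < ‖z‖ := norm_pos_iff.mpr hz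
    have hx_mem : (‖z‖⁻¹ • z) ∈ sphere (0:E) 1 := by
      rw [mem_sphere_zero_iff_norm, norm_smul, norm_inv, norm_norm,
        inv_mul_cancel₀ hzn.ne']
    have hTz : T z = (y : F) := by
      rw [← hecoe]; exact e.apply_symm_apply (y : F)
    have hTx : ‖T (‖z‖⁻¹ • z)‖ = ‖z‖⁻¹ := by
      rw [map_smul, hTz, norm_smul, norm_inv, norm_norm, hy, mul_one]
    have hinner : (inner ℝ ((adjoint T) (y:F)) z : ℝ) = 1 := by
      rw [adjoint_inner_left, hTz, real_inner_self_eq_norm_mul_norm, hy, mul_one]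
    have h1 : (1:ℝ) ≤ ‖adjoint T (y:F)‖ * ‖z‖ := by
      calc (1:ℝ) = inner ℝ ((adjoint T) (y:F)) z := hinner.symm
        _ ≤ ‖adjoint T (y:F)‖ * ‖z‖ := real_inner_le_norm _ _
    have h2 : ‖z‖⁻¹ ≤ ‖adjoint T (y:F)‖ := by
      rw [inv_eq_one_div, div_le_iff₀ hzn]; linarith
    calc (⨅ x : sphere (0:E) 1, ‖T x‖) ≤ ‖T (‖z‖⁻¹ • z)‖ := ciInf_le bddE ⟨_, hx_mem⟩
      _ = ‖z‖⁻¹ := hTx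
      _ ≤ ‖adjoint T (y:F)‖ := h2
  · obtain ⟨x, hxker, hx0⟩ := Submodule.exists_mem_ne_zero_of_ne_bot hker
    have hxn : 0 < ‖x‖ := norm_pos_iff.mpr hx0
    have hx_mem : (‖x‖⁻¹ • x) ∈ sphere (0:E) 1 := by
      rw [mem_sphere_zero_iff_norm, norm_smul, norm_inv, norm_norm,
        inv_mul_cancel₀ hxn.ne']
    have hTx : ‖T (‖x‖⁻¹ • x)‖ = 0 := by
      rw [map_smul, show T x = 0 from LinearMap.mem_ker.mp hxker, smul_zero, norm_zero]
    calc (⨅ x : sphere (0:E) 1, ‖T x‖) ≤ ‖T (‖x‖⁻¹ • x)‖ := ciInf_le bddE ⟨_, hx_mem⟩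
      _ = 0 := hTx
      _ ≤ _ := le_ciInf fun y => norm_nonneg _

lemma key_eq [FiniteDimensional ℝ E] [FiniteDimensional ℝ F] [Nontrivial E] [Nontrivial F]
    (h : finrank ℝ E = finrank ℝ F) (T : E →L[ℝ] F) :
    (⨅ x : sphere (0:E) 1, ‖T x‖) = ⨅ y : sphere (0:F) 1, ‖adjoint T y‖ := by
  refine le_antisymm (key_le h T) ?_
  have := key_le h.symm (adjoint T)
  rwa [adjoint_adjoint] at this

end Key

section Hilbert

variable {H : Type*} [NormedAddCommGroup H] [InnerProductSpace ℝ H]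

/-- Equivalence between the sphere of a submodule and the corresponding subtype in `H`. -/
def subEquiv (U : Submodule ℝ H) : sphere (0 : ↥U) 1 ≃ {x : H // x ∈ U ∧ ‖x‖ = 1} where
  toFun x := ⟨((x : ↥U) : H), (x : ↥U).2, mem_sphere_zero_iff_norm.mp x.2⟩
  invFun x := ⟨⟨x.1, x.2.1⟩, by
    rw [mem_sphere_zero_iff_norm]
    exact x.2.2⟩
  left_inv x := rfl
  right_inv x := rfl

lemma inner_proj_eq (V : Submodule ℝ H) [Submodule.HasOrthogonalProjection V] (u : H) {w : H}
    (hw : w ∈ V) :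
    (inner ℝ u w : ℝ) = inner ℝ ((Submodule.orthogonalProjection V u : H)) w := by
  have h0 : (inner ℝ (u - (Submodule.orthogonalProjection V u : H)) w : ℝ) = 0 :=
    Submodule.starProjection_inner_eq_zero u w hw
  rw [inner_sub_left] at h0; linarith

lemma lemA (V : Submodule ℝ H) [FiniteDimensional ℝ V]
    [Nonempty {x : H // x ∈ V ∧ ‖x‖ = 1}] {u : H} (hu : ‖u‖ = 1) :
    (⨅ v : {x : H // x ∈ V ∧ ‖x‖ = 1}, ‖u - ↑v‖)
      = Real.sqrt (2 - 2 * ‖(Submodule.orthogonalProjection V u : H)‖) := by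
  set p : H := (Submodule.orthogonalProjection V u : H) with hp_def
  have hnorm : ∀ v : {x : H // x ∈ V ∧ ‖x‖ = 1},
      ‖u - (v:H)‖ = Real.sqrt (2 - 2 * inner ℝ u (v:H)) := by
    intro v
    have hsq := norm_sub_sq_real u (v : H)
    rw [hu, v.2.2] at hsq
    rw [← Real.sqrt_sq (norm_nonneg (u - (v:H))), hsq]
    ring_nf
  apply ciInf_eq_of_min'
  · intro v
    rw [hnorm v]
    apply Real.sqrt_le_sqrt
    have h1 : (inner ℝ u (v:H) : ℝ) ≤ ‖p‖ := by
      rw [inner_proj_eq V u v.2.1, ← hp_def]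
      calc (inner ℝ p (v:H) : ℝ) ≤ ‖p‖ * ‖(v:H)‖ := real_inner_le_norm _ _
        _ = ‖p‖ := by rw [v.2.2, mul_one]
    linarith
  · by_cases hp : p = 0
    · obtain ⟨v⟩ := (inferInstance : Nonempty {x : H // x ∈ V ∧ ‖x‖ = 1})
      refine ⟨v, ?_⟩
      have : (inner ℝ u (v:H) : ℝ) = 0 := by
        rw [inner_proj_eq V u v.2.1, ← hp_def, hp, inner_zero_left]
      rw [hnorm v, this, hp, norm_zero]
    · have hpV : p ∈ V := (Submodule.orthogonalProjection V u).2
      have hpn : 0 < ‖p‖ := norm_pos_iff.mpr hp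
      refine ⟨⟨‖p‖⁻¹ • p, V.smul_mem _ hpV, by
        rw [norm_smul, norm_inv, norm_norm, inv_mul_cancel₀ hpn.ne']⟩, ?_⟩
      have hip : (inner ℝ u (‖p‖⁻¹ • p) : ℝ) = ‖p‖ := by
        rw [real_inner_smul_right, inner_proj_eq V u hpV, ← hp_def,
          real_inner_self_eq_norm_mul_norm]
        field_simp
      rw [hnorm, hip]

lemma proj_min_symm (U V : Submodule ℝ H) [FiniteDimensional ℝ U] [FiniteDimensional ℝ V]
    [Nontrivial ↥U] [Nontrivial ↥V] (h : finrank ℝ ↥U = finrank ℝ ↥V) :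
    (⨅ u : {x : H // x ∈ U ∧ ‖x‖ = 1}, ‖(Submodule.orthogonalProjection V ↑u : H)‖)
      = ⨅ v : {x : H // x ∈ V ∧ ‖x‖ = 1}, ‖(Submodule.orthogonalProjection U ↑v : H)‖ := by
  set T : ↥U →L[ℝ] ↥V := (Submodule.orthogonalProjection V).comp U.subtypeL with hT
  have hadj : adjoint T = (Submodule.orthogonalProjection U).comp V.subtypeL := by
    symm
    rw [eq_adjoint_iff]
    intro x y
    rw [Submodule.coe_inner, Submodule.coe_inner]
    show (inner ℝ ((Submodule.orthogonalProjection U (x:H) : H)) (y:H) : ℝ)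
      = inner ℝ (x:H) ((Submodule.orthogonalProjection V (y:H) : H))
    rw [real_inner_comm ((Submodule.orthogonalProjection V (y:H) : H)) (x:H),
      ← inner_proj_eq V (y:H) x.2, ← inner_proj_eq U (x:H) y.2]
    exact real_inner_comm _ _
  have h1 : (⨅ u : {x : H // x ∈ U ∧ ‖x‖ = 1}, ‖(Submodule.orthogonalProjection V ↑u : H)‖)
      = ⨅ x : sphere (0 : ↥U) 1, ‖T x‖ := by
    rw [← iInf_comp_equiv' (subEquiv U) (fun u => ‖(Submodule.orthogonalProjection V ↑u : H)‖)]
    exact iInf_congr fun x => by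
      simp only [hT, ContinuousLinearMap.comp_apply, Submodule.coe_norm]
      rfl
  have h2 : (⨅ v : {x : H // x ∈ V ∧ ‖x‖ = 1}, ‖(Submodule.orthogonalProjection U ↑v : H)‖)
      = ⨅ y : sphere (0 : ↥V) 1, ‖adjoint T y‖ := by
    rw [← iInf_comp_equiv' (subEquiv V) (fun v => ‖(Submodule.orthogonalProjection U ↑v : H)‖)]
    exact iInf_congr fun y => by
      simp only [hadj, ContinuousLinearMap.comp_apply, Submodule.coe_norm]
      rfl
  rw [h1, h2, key_eq h T]

lemma main_side (U V : Submodule ℝ H) [FiniteDimensional ℝ U] [FiniteDimensional ℝ V]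
    [Nontrivial ↥U]
    [Nonempty {x : H // x ∈ U ∧ ‖x‖ = 1}] [Nonempty {x : H // x ∈ V ∧ ‖x‖ = 1}] :
    (⨆ u : {x : H // x ∈ U ∧ ‖x‖ = 1}, ⨅ v : {x : H // x ∈ V ∧ ‖x‖ = 1}, ‖(u:H) - ↑v‖)
      = Real.sqrt (2 - 2 * ⨅ u : {x : H // x ∈ U ∧ ‖x‖ = 1},
          ‖(Submodule.orthogonalProjection V ↑u : H)‖) := by
  -- the minimum of u ↦ ‖P_V u‖ is attained
  set f : {x : H // x ∈ U ∧ ‖x‖ = 1} → ℝ :=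
    fun u => ‖(Submodule.orthogonalProjection V (↑u : H) : H)‖ with hf
  have hcont : Continuous fun x : ↥U => ‖(Submodule.orthogonalProjection V (x : H) : H)‖ :=
    (V.subtypeL.comp ((Submodule.orthogonalProjection V).comp U.subtypeL)).continuous.norm
  obtain ⟨x₀, hx₀mem, hx₀⟩ := (isCompact_sphere (0 : ↥U) 1).exists_isMinOn
    (NormedSpace.sphere_nonempty.mpr zero_le_one) hcont.continuousOn
  set u₀ := subEquiv U ⟨x₀, hx₀mem⟩ with hu₀
  have hmin : ∀ u, f u₀ ≤ f u := by
    intro u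
    have := hx₀ ((subEquiv U).symm u).2
    simpa [f, subEquiv, u₀] using this
  have hInf : (⨅ u, f u) = f u₀ := ciInf_eq_of_min' hmin ⟨u₀, rfl⟩
  have hstep : ∀ u : {x : H // x ∈ U ∧ ‖x‖ = 1},
      (⨅ v : {x : H // x ∈ V ∧ ‖x‖ = 1}, ‖(u:H) - ↑v‖) = Real.sqrt (2 - 2 * f u) :=
    fun u => lemA V u.2.2
  calc (⨆ u : {x : H // x ∈ U ∧ ‖x‖ = 1}, ⨅ v : {x : H // x ∈ V ∧ ‖x‖ = 1}, ‖(u:H) - ↑v‖)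
      = ⨆ u, Real.sqrt (2 - 2 * f u) := iSup_congr hstep
    _ = Real.sqrt (2 - 2 * f u₀) := by
        apply ciSup_eq_of_max'
        · intro u
          apply Real.sqrt_le_sqrt
          have := hmin u
          linarith
        · exact ⟨u₀, rfl⟩
    _ = Real.sqrt (2 - 2 * ⨅ u, f u) := by rw [hInf]

end Hilbert

end

theorem stmt1 {H : Type*} [NormedAddCommGroup H] [InnerProductSpace ℝ H]
    (k : ℕ) (U V : Submodule ℝ H) [FiniteDimensional ℝ U] [FiniteDimensional ℝ V]
    (hU : Module.finrank ℝ U = k) (hV : Module.finrank ℝ V = k) :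
    (⨆ u : {x : H // x ∈ U ∧ ‖x‖ = 1}, ⨅ v : {x : H // x ∈ V ∧ ‖x‖ = 1},
        ‖(u : H) - (v : H)‖)
      = (⨆ v : {x : H // x ∈ V ∧ ‖x‖ = 1}, ⨅ u : {x : H // x ∈ U ∧ ‖x‖ = 1},
        ‖(u : H) - (v : H)‖) := by
  rcases Nat.eq_zero_or_pos k with hk | hk
  · subst hk
    have hU0 : U = ⊥ := Submodule.finrank_eq_zero.mp hU
    have hV0 : V = ⊥ := Submodule.finrank_eq_zero.mp hV
    haveI : IsEmpty {x : H // x ∈ U ∧ ‖x‖ = 1} := by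
      refine ⟨fun x => ?_⟩
      obtain ⟨xv, hxU, hxn⟩ := x
      rw [hU0, Submodule.mem_bot] at hxU
      rw [hxU, norm_zero] at hxn
      norm_num at hxn
    haveI : IsEmpty {x : H // x ∈ V ∧ ‖x‖ = 1} := by
      refine ⟨fun x => ?_⟩
      obtain ⟨xv, hxV, hxn⟩ := x
      rw [hV0, Submodule.mem_bot] at hxV
      rw [hxV, norm_zero] at hxn
      norm_num at hxn
    rw [Real.iSup_of_isEmpty, Real.iSup_of_isEmpty]
  · haveI hUnt : Nontrivial ↥U :=
      Module.nontrivial_of_finrank_pos (R := ℝ) (M := ↥U) (by omega)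
    haveI hVnt : Nontrivial ↥V :=
      Module.nontrivial_of_finrank_pos (R := ℝ) (M := ↥V) (by omega)
    haveI : Nonempty {x : H // x ∈ U ∧ ‖x‖ = 1} :=
      Nonempty.map (subEquiv U) (NormedSpace.sphere_nonempty.mpr zero_le_one).to_subtype
    haveI : Nonempty {x : H // x ∈ V ∧ ‖x‖ = 1} :=
      Nonempty.map (subEquiv V) (NormedSpace.sphere_nonempty.mpr zero_le_one).to_subtype
    have hRflip : (⨆ v : {x : H // x ∈ V ∧ ‖x‖ = 1}, ⨅ u : {x : H // x ∈ U ∧ ‖x‖ = 1},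
          ‖(u : H) - (v : H)‖)
        = ⨆ v : {x : H // x ∈ V ∧ ‖x‖ = 1}, ⨅ u : {x : H // x ∈ U ∧ ‖x‖ = 1},
          ‖(v : H) - (u : H)‖ :=
      iSup_congr fun v => iInf_congr fun u => norm_sub_rev _ _
    rw [hRflip, main_side U V, main_side V U, proj_min_symm U V (by rw [hU, hV])]
end

section
/- Let H be a Hilbert space, U a closed subspace of codimension k, and V a subspace of dimension k. Define ⊥(U,V) = (1/√2) min{‖u − v‖ : u ∈ U, v ∈ V, ‖u‖ = ‖v‖ = 1}. Then the k-th singular value of the composition Π_{U^⊥} ∘ Π_V satisfies s_k(Π_{U^⊥} Π_V) ≥ ⊥(U,V); equivalently, ‖Π_{U^⊥} v‖ ≥ ⊥(U,V) · ‖v‖ for every v ∈ V. -/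
open scoped InnerProductSpace


set_option synthInstance.maxHeartbeats 1000000

/-- `⊥(U,V)`: transversality measure between subspaces `U` and `V` of a Hilbert space. -/
noncomputable def perpDist {H : Type*} [NormedAddCommGroup H] [InnerProductSpace ℝ H]
    (U V : Submodule ℝ H) : ℝ :=
  (1 / Real.sqrt 2) *
    sInf {d : ℝ | ∃ u ∈ U, ∃ v ∈ V, ‖u‖ = 1 ∧ ‖v‖ = 1 ∧ d = ‖u - v‖}

private lemma perpDist_key {H : Type*} [NormedAddCommGroup H] [InnerProductSpace ℝ H]
    [CompleteSpace H] (U V : Submodule ℝ H) [CompleteSpace U] (v : H) (hv : v ∈ V)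
    (hv1 : ‖v‖ = 1) :
    perpDist U V ≤ ‖(Submodule.orthogonalProjection Uᗮ v : H)‖ := by
  set w : H := (Submodule.orthogonalProjection Uᗮ v : H) with hwdef
  have hwmem : w ∈ Uᗮ := (Submodule.orthogonalProjection Uᗮ v).2
  set u : H := (Submodule.orthogonalProjection U v : H) with hudef
  have humem : u ∈ U := (Submodule.orthogonalProjection U v).2
  have hsum : v = u + w := (Submodule.starProjection_add_starProjection_orthogonal (K := U) v).symm
  have hortho : ⟪u, w⟫_ℝ = 0 := Submodule.inner_right_of_mem_orthogonal humem hwmem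
  have hpyth : ‖u‖^2 + ‖w‖^2 = 1 := by
    have h := norm_add_sq_real u w
    rw [← hsum, hv1] at h
    nlinarith [h]
  have hune : 0 ≤ ‖u‖ := norm_nonneg u
  have hwne : 0 ≤ ‖w‖ := norm_nonneg w
  have hule : ‖u‖ ≤ 1 := by nlinarith
  -- main helper
  have main : ∀ u' : H, u' ∈ U → ‖u'‖ = 1 → ‖u' - v‖^2 ≤ 2 * ‖w‖^2 →
      perpDist U V ≤ ‖w‖ := by
    intro u' hu' hu'1 hsq
    have hd0 : (0:ℝ) ≤ ‖u' - v‖ := norm_nonneg _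
    have hbdd : BddBelow {d : ℝ | ∃ a ∈ U, ∃ b ∈ V, ‖a‖ = 1 ∧ ‖b‖ = 1 ∧ d = ‖a - b‖} := by
      refine ⟨0, ?_⟩
      rintro d ⟨a, _, b, _, _, _, rfl⟩
      exact norm_nonneg _
    have hmem : ‖u' - v‖ ∈ {d : ℝ | ∃ a ∈ U, ∃ b ∈ V, ‖a‖ = 1 ∧ ‖b‖ = 1 ∧ d = ‖a - b‖} :=
      ⟨u', hu', v, hv, hu'1, hv1, rfl⟩
    have hinf : sInf {d : ℝ | ∃ a ∈ U, ∃ b ∈ V, ‖a‖ = 1 ∧ ‖b‖ = 1 ∧ d = ‖a - b‖} ≤ ‖u' - v‖ :=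
      csInf_le hbdd hmem
    have hdle : ‖u' - v‖ ≤ Real.sqrt 2 * ‖w‖ := by
      have h1 : ‖u' - v‖ = Real.sqrt (‖u' - v‖^2) := (Real.sqrt_sq hd0).symm
      rw [h1]
      have h2 : Real.sqrt (‖u' - v‖^2) ≤ Real.sqrt (2 * ‖w‖^2) := Real.sqrt_le_sqrt hsq
      calc Real.sqrt (‖u' - v‖^2) ≤ Real.sqrt (2 * ‖w‖^2) := h2
        _ = Real.sqrt 2 * ‖w‖ := by
            rw [Real.sqrt_mul (by norm_num), Real.sqrt_sq hwne]
    have hs2 : (0:ℝ) < Real.sqrt 2 := Real.sqrt_pos.mpr (by norm_num)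
    unfold perpDist
    calc (1 / Real.sqrt 2) * sInf {d : ℝ | ∃ a ∈ U, ∃ b ∈ V, ‖a‖ = 1 ∧ ‖b‖ = 1 ∧ d = ‖a - b‖}
        ≤ (1 / Real.sqrt 2) * ‖u' - v‖ := by
          apply mul_le_mul_of_nonneg_left hinf (by positivity)
      _ ≤ (1 / Real.sqrt 2) * (Real.sqrt 2 * ‖w‖) := by
          apply mul_le_mul_of_nonneg_left hdle (by positivity)
      _ = ‖w‖ := by field_simp
  rcases eq_or_ne u 0 with hu0 | hu0
  · -- v ∈ Uᗮ, so ‖w‖ = 1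
    have hw1 : ‖w‖ = 1 := by
      rw [hu0] at hpyth
      simp at hpyth
      rcases hpyth with h | h
      · exact h
      · nlinarith
    rcases eq_or_ne U ⊥ with hUbot | hUbot
    · -- the set is empty
      have hempty : {d : ℝ | ∃ a ∈ U, ∃ b ∈ V, ‖a‖ = 1 ∧ ‖b‖ = 1 ∧ d = ‖a - b‖} = ∅ := by
        ext d
        simp only [Set.mem_setOf_eq, Set.mem_empty_iff_false, iff_false]
        rintro ⟨a, ha, b, hb, ha1, hb1, rfl⟩
        rw [hUbot, Submodule.mem_bot] at ha
        rw [ha, norm_zero] at ha1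
        norm_num at ha1
      unfold perpDist
      rw [hempty, Real.sInf_empty, mul_zero]
      exact hwne
    · obtain ⟨x, hxU, hx0⟩ := Submodule.exists_mem_ne_zero_of_ne_bot hUbot
      have hxn : (0:ℝ) < ‖x‖ := norm_pos_iff.mpr hx0
      set u' : H := ‖x‖⁻¹ • x with hu'def
      have hu'U : u' ∈ U := U.smul_mem _ hxU
      have hu'1 : ‖u'‖ = 1 := by
        rw [hu'def, norm_smul, norm_inv, norm_norm]
        field_simp
      apply main u' hu'U hu'1
      have hvw : v = w := by rw [hsum, hu0, zero_add]
      have hiuv : ⟪u', v⟫_ℝ = 0 := by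
        rw [hvw]
        exact Submodule.inner_right_of_mem_orthogonal hu'U hwmem
      have hns : ‖u' - v‖^2 = ‖u'‖^2 - 2 * ⟪u', v⟫_ℝ + ‖v‖^2 := by
        have := norm_sub_sq_real u' v
        nlinarith [this]
      rw [hns, hiuv, hu'1, hv1, hw1]
      norm_num
  · have hun : (0:ℝ) < ‖u‖ := norm_pos_iff.mpr hu0
    set u' : H := ‖u‖⁻¹ • u with hu'def
    have hu'U : u' ∈ U := U.smul_mem _ humem
    have hu'1 : ‖u'‖ = 1 := by
      rw [hu'def, norm_smul, norm_inv, norm_norm]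
      field_simp
    apply main u' hu'U hu'1
    have huv : ⟪u, v⟫_ℝ = ‖u‖^2 := by
      rw [hsum, inner_add_right, hortho, real_inner_self_eq_norm_sq]
      ring
    have hiuv : ⟪u', v⟫_ℝ = ‖u‖ := by
      rw [hu'def, real_inner_smul_left, huv]
      field_simp
    have hns : ‖u' - v‖^2 = ‖u'‖^2 - 2 * ⟪u', v⟫_ℝ + ‖v‖^2 := by
      have := norm_sub_sq_real u' v
      nlinarith [this]
    rw [hns, hiuv, hu'1, hv1]
    nlinarith

theorem stmt2 {H : Type*} [NormedAddCommGroup H] [InnerProductSpace ℝ H] [CompleteSpace H]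
    (k : ℕ) (U V : Submodule ℝ H) (hUc : IsClosed (U : Set H))
    [FiniteDimensional ℝ (Uᗮ : Submodule ℝ H)] (hU : Module.finrank ℝ (Uᗮ : Submodule ℝ H) = k)
    [FiniteDimensional ℝ V] (hV : Module.finrank ℝ V = k) :
    ∀ v ∈ V, ‖(Submodule.orthogonalProjection Uᗮ v : H)‖ ≥ perpDist U V * ‖v‖ := by
  intro v hv
  haveI : CompleteSpace U := hUc.completeSpace_coe
  rcases eq_or_ne v 0 with rfl | hv0
  · simp
  have hvn : (0:ℝ) < ‖v‖ := norm_pos_iff.mpr hv0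
  have h1 : ‖(‖v‖⁻¹ • v)‖ = 1 := by
    rw [norm_smul, norm_inv, norm_norm]
    field_simp
  have hkey := perpDist_key U V (‖v‖⁻¹ • v) (V.smul_mem _ hv) h1
  have hproj : (Submodule.orthogonalProjection Uᗮ (‖v‖⁻¹ • v) : H)
      = ‖v‖⁻¹ • (Submodule.orthogonalProjection Uᗮ v : H) := by
    rw [map_smul]
    rfl
  rw [hproj, norm_smul, norm_inv, norm_norm] at hkey
  rw [ge_iff_le]
  calc perpDist U V * ‖v‖ ≤ (‖v‖⁻¹ * ‖(Submodule.orthogonalProjection Uᗮ v : H)‖) * ‖v‖ :=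
        mul_le_mul_of_nonneg_right hkey (le_of_lt hvn)
    _ = ‖(Submodule.orthogonalProjection Uᗮ v : H)‖ := by field_simp
end

section
/- For closed subspaces U', U of codimension k and V, V' of dimension k in a Hilbert space H, one has the reverse triangle inequality ⊥(U',V') ≥ ⊥(U,V) − ∠(V,V') − ∠(U,U'), where ∠ denotes the Hausdorff distance between intersections of subspaces with the unit sphere and ⊥(U,V) = (1/√2) min{‖u − v‖ : u ∈ U ∩ S, v ∈ V ∩ S}. -/
/-- `∠(U,V)`: the Hausdorff distance between the intersections of the subspaces
`U` and `V` with the unit sphere of `H`. -/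
noncomputable def angleDist {H : Type*} [NormedAddCommGroup H] [InnerProductSpace ℝ H]
    (U V : Submodule ℝ H) : ℝ :=
  Metric.hausdorffDist ((U : Set H) ∩ Metric.sphere (0 : H) 1)
    ((V : Set H) ∩ Metric.sphere (0 : H) 1)

lemma exists_norm_one_aux {H : Type*} [NormedAddCommGroup H] [NormedSpace ℝ H]
    {p : Submodule ℝ H} (h : p ≠ ⊥) : ∃ x ∈ p, ‖x‖ = 1 := by
  obtain ⟨v, hv, hv0⟩ := (Submodule.ne_bot_iff p).mp h
  refine ⟨‖v‖⁻¹ • v, p.smul_mem _ hv, ?_⟩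
  rw [norm_smul, norm_inv, norm_norm, inv_mul_cancel₀ (norm_ne_zero_iff.mpr hv0)]

theorem stmt5 {H : Type*} [NormedAddCommGroup H] [InnerProductSpace ℝ H] [CompleteSpace H]
    (k : ℕ) (U U' V V' : Submodule ℝ H)
    (hUc : IsClosed (U : Set H)) (hU'c : IsClosed (U' : Set H))
    (hU : Module.finrank ℝ (Uᗮ : Submodule ℝ H) = k)
    (hU' : Module.finrank ℝ (U'ᗮ : Submodule ℝ H) = k)
    [FiniteDimensional ℝ V] [FiniteDimensional ℝ V']
    (hV : Module.finrank ℝ V = k) (hV' : Module.finrank ℝ V' = k) :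
    perpDist U' V' ≥ perpDist U V - angleDist V V' - angleDist U U' := by
  have hA1 : 0 ≤ angleDist U U' := Metric.hausdorffDist_nonneg
  have hA2 : 0 ≤ angleDist V V' := Metric.hausdorffDist_nonneg
  set P : Set ℝ := {d : ℝ | ∃ u ∈ U, ∃ v ∈ V, ‖u‖ = 1 ∧ ‖v‖ = 1 ∧ d = ‖u - v‖} with hP
  set P' : Set ℝ := {d : ℝ | ∃ u ∈ U', ∃ v ∈ V', ‖u‖ = 1 ∧ ‖v‖ = 1 ∧ d = ‖u - v‖} with hP'
  have hperp : perpDist U V = (1 / Real.sqrt 2) * sInf P := rfl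
  have hperp' : perpDist U' V' = (1 / Real.sqrt 2) * sInf P' := rfl
  -- the trivial case when both P and P' are empty
  have trivial_case : P = ∅ → P' = ∅ →
      perpDist U' V' ≥ perpDist U V - angleDist V V' - angleDist U U' := by
    intro h1 h2
    rw [hperp, hperp', h1, h2, Real.sInf_empty, mul_zero]
    linarith
  rcases Nat.eq_zero_or_pos k with hk | hk
  · -- k = 0 : V = V' = ⊥
    subst hk
    have hVbot : V = ⊥ := Submodule.finrank_eq_zero.mp hV
    have hV'bot : V' = ⊥ := Submodule.finrank_eq_zero.mp hV'
    apply trivial_case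
    · ext d
      simp only [Set.mem_setOf_eq, Set.mem_empty_iff_false, iff_false]
      rintro ⟨u, -, v, hv, -, hv1, -⟩
      rw [hVbot, Submodule.mem_bot] at hv
      rw [hv, norm_zero] at hv1
      exact one_ne_zero hv1.symm
    · ext d
      simp only [Set.mem_setOf_eq, Set.mem_empty_iff_false, iff_false]
      rintro ⟨u, -, v, hv, -, hv1, -⟩
      rw [hV'bot, Submodule.mem_bot] at hv
      rw [hv, norm_zero] at hv1
      exact one_ne_zero hv1.symm
  · -- k ≥ 1
    have hSV : ∃ x ∈ V, ‖x‖ = 1 := by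
      apply exists_norm_one_aux
      intro h; rw [h, finrank_bot] at hV; omega
    have hSV' : ∃ x ∈ V', ‖x‖ = 1 := by
      apply exists_norm_one_aux
      intro h; rw [h, finrank_bot] at hV'; omega
    -- If U = ⊥ then U' = ⊥ too (and symmetrically); handle those degenerate cases.
    have bot_case : ∀ (W W' : Submodule ℝ H), IsClosed (W' : Set H) →
        Module.finrank ℝ (Wᗮ : Submodule ℝ H) = k →
        Module.finrank ℝ (W'ᗮ : Submodule ℝ H) = k → W = ⊥ → W' = ⊥ := by
      intro W W' hW'c hW hW' hbot
      rw [hbot, Submodule.bot_orthogonal_eq_top] at hW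
      have : FiniteDimensional ℝ H := by
        have := Module.finite_of_finrank_pos (R := ℝ) (M := (⊤ : Submodule ℝ H))
          (by omega : 0 < Module.finrank ℝ (⊤ : Submodule ℝ H))
        exact Module.Finite.of_surjective (⊤ : Submodule ℝ H).subtype
          (fun x => ⟨⟨x, trivial⟩, rfl⟩)
      have htop : W'ᗮ = ⊤ := by
        apply Submodule.eq_top_of_finrank_eq
        rw [hW', ← hW, finrank_top]
      have : W' ≤ ⊥ := by
        calc W' ≤ W'ᗮᗮ := Submodule.le_orthogonal_orthogonal W'
        _ = ⊥ := by rw [htop, Submodule.top_orthogonal_eq_bot]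
      exact le_bot_iff.mp this
    by_cases hUbot : U = ⊥
    · have hU'bot : U' = ⊥ := bot_case U U' hU'c hU hU' hUbot
      apply trivial_case <;>
      · ext d
        simp only [Set.mem_setOf_eq, Set.mem_empty_iff_false, iff_false]
        rintro ⟨u, hu, v, -, hu1, -, -⟩
        first
        | (rw [hUbot, Submodule.mem_bot] at hu; rw [hu, norm_zero] at hu1;
           exact one_ne_zero hu1.symm)
        | (rw [hU'bot, Submodule.mem_bot] at hu; rw [hu, norm_zero] at hu1;
           exact one_ne_zero hu1.symm)
    · by_cases hU'bot : U' = ⊥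
      · exact absurd (bot_case U' U hUc hU' hU hU'bot) hUbot
      -- Main case: everything nonempty
      have hSU : ∃ x ∈ U, ‖x‖ = 1 := exists_norm_one_aux hUbot
      have hSU' : ∃ x ∈ U', ‖x‖ = 1 := exists_norm_one_aux hU'bot
      set SU := (U : Set H) ∩ Metric.sphere (0 : H) 1 with hSUdef
      set SU' := (U' : Set H) ∩ Metric.sphere (0 : H) 1 with hSU'def
      set SV := (V : Set H) ∩ Metric.sphere (0 : H) 1 with hSVdef
      set SV' := (V' : Set H) ∩ Metric.sphere (0 : H) 1 with hSV'def
      have sphere_mem : ∀ (W : Submodule ℝ H) (x : H), x ∈ W → ‖x‖ = 1 →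
          x ∈ (W : Set H) ∩ Metric.sphere (0 : H) 1 := by
        intro W x hx h1
        exact ⟨hx, by simpa [mem_sphere_iff_norm] using h1⟩
      have hSUne : SU.Nonempty := by obtain ⟨x, h1, h2⟩ := hSU; exact ⟨x, sphere_mem U x h1 h2⟩
      have hSU'ne : SU'.Nonempty := by obtain ⟨x, h1, h2⟩ := hSU'; exact ⟨x, sphere_mem U' x h1 h2⟩
      have hSVne : SV.Nonempty := by obtain ⟨x, h1, h2⟩ := hSV; exact ⟨x, sphere_mem V x h1 h2⟩
      have hSV'ne : SV'.Nonempty := by obtain ⟨x, h1, h2⟩ := hSV'; exact ⟨x, sphere_mem V' x h1 h2⟩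
      have hbdd : ∀ (W : Submodule ℝ H),
          Bornology.IsBounded ((W : Set H) ∩ Metric.sphere (0 : H) 1) :=
        fun W => Metric.isBounded_sphere.subset Set.inter_subset_right
      have hedistU : EMetric.hausdorffEdist SU' SU ≠ ⊤ :=
        Metric.hausdorffEdist_ne_top_of_nonempty_of_bounded hSU'ne hSUne (hbdd U') (hbdd U)
      have hedistV : EMetric.hausdorffEdist SV' SV ≠ ⊤ :=
        Metric.hausdorffEdist_ne_top_of_nonempty_of_bounded hSV'ne hSVne (hbdd V') (hbdd V)
      have hPbdd : BddBelow P := ⟨0, by rintro d ⟨u, -, v, -, -, -, rfl⟩; positivity⟩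
      have hP'ne : P'.Nonempty := by
        obtain ⟨u, hu, hu1⟩ := hSU'
        obtain ⟨v, hv, hv1⟩ := hSV'
        exact ⟨‖u - v‖, u, hu, v, hv, hu1, hv1, rfl⟩
      -- key: every element of P' is ≥ sInf P - angles
      have key : ∀ d ∈ P', sInf P - angleDist V V' - angleDist U U' ≤ d := by
        rintro d ⟨u', hu', v', hv', hu'1, hv'1, rfl⟩
        have : sInf P ≤ ‖u' - v'‖ + angleDist U U' + angleDist V V' := by
          apply le_of_forall_pos_le_add
          intro ε hε
          have hdU : Metric.hausdorffDist SU' SU < angleDist U U' + ε / 2 := by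
            rw [angleDist, Metric.hausdorffDist_comm]
            linarith [Metric.hausdorffDist_comm (s := SU) (t := SU')]
          have hdV : Metric.hausdorffDist SV' SV < angleDist V V' + ε / 2 := by
            rw [angleDist, Metric.hausdorffDist_comm]
            linarith [Metric.hausdorffDist_comm (s := SV) (t := SV')]
          obtain ⟨u, hu, huu'⟩ := Metric.exists_dist_lt_of_hausdorffDist_lt
            (sphere_mem U' u' hu' hu'1) hdU hedistU
          obtain ⟨v, hv, hvv'⟩ := Metric.exists_dist_lt_of_hausdorffDist_lt
            (sphere_mem V' v' hv' hv'1) hdV hedistV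
          have huU : u ∈ U := hu.1
          have hu1 : ‖u‖ = 1 := by simpa [mem_sphere_iff_norm] using hu.2
          have hvV : v ∈ V := hv.1
          have hv1 : ‖v‖ = 1 := by simpa [mem_sphere_iff_norm] using hv.2
          have hmem : ‖u - v‖ ∈ P := ⟨u, huU, v, hvV, hu1, hv1, rfl⟩
          have h1 : sInf P ≤ ‖u - v‖ := csInf_le hPbdd hmem
          have h2 : ‖u - v‖ ≤ ‖u - u'‖ + ‖u' - v'‖ + ‖v' - v‖ := by
            have := norm_add₃_le (a := u - u') (b := u' - v') (c := v' - v)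
            simpa using this
          rw [dist_comm, dist_eq_norm] at huu'
          rw [dist_comm, dist_eq_norm] at hvv'
          calc sInf P ≤ ‖u - u'‖ + ‖u' - v'‖ + ‖v' - v‖ := h1.trans h2
            _ ≤ (angleDist U U' + ε / 2) + ‖u' - v'‖ + (angleDist V V' + ε / 2) := by
                have h3 : ‖v' - v‖ = ‖v - v'‖ := norm_sub_rev _ _
                rw [h3]; linarith
            _ = ‖u' - v'‖ + angleDist U U' + angleDist V V' + ε := by ring
        linarith
      have hInf' : sInf P - angleDist V V' - angleDist U U' ≤ sInf P' := le_csInf hP'ne key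
      have hsqrt : 1 ≤ Real.sqrt 2 := by
        rw [show (1:ℝ) = Real.sqrt 1 by simp]
        exact Real.sqrt_le_sqrt (by norm_num)
      have hpos : 0 < Real.sqrt 2 := by positivity
      rw [hperp, hperp']
      have h4 : (1 / Real.sqrt 2) * (sInf P - angleDist V V' - angleDist U U') ≤
          (1 / Real.sqrt 2) * sInf P' := by
        apply mul_le_mul_of_nonneg_left hInf' (by positivity)
      have h5 : (1 / Real.sqrt 2) * sInf P - angleDist V V' - angleDist U U' ≤
          (1 / Real.sqrt 2) * (sInf P - angleDist V V' - angleDist U U') := by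
        rw [mul_sub, mul_sub]
        have hinv : (1 / Real.sqrt 2 : ℝ) ≤ 1 := by
          rw [div_le_one hpos]; exact hsqrt
        have e1 : (1 / Real.sqrt 2) * angleDist V V' ≤ angleDist V V' :=
          mul_le_of_le_one_left hA2 hinv
        have e2 : (1 / Real.sqrt 2) * angleDist U U' ≤ angleDist U U' :=
          mul_le_of_le_one_left hA1 hinv
        linarith
      linarith
end

section
/- There exists a constant C > 0 such that for every complex number z, | ∫_{-∞}^{∞} (e^{−x²/2}/√(2π)) log|x − z| dx − log⁺|z| | ≤ C, where log⁺|z| = max(log|z|, 0). -/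
open MeasureTheory Real Set


noncomputable def gg (x : ℝ) : ℝ := Real.exp (-x ^ 2 / 2) / Real.sqrt (2 * Real.pi)

lemma sqrt2pi_pos : 0 < Real.sqrt (2 * Real.pi) :=
  Real.sqrt_pos.2 (by positivity)

lemma one_le_sqrt2pi : 1 ≤ Real.sqrt (2 * Real.pi) := by
  rw [show (1:ℝ) = Real.sqrt 1 by simp]
  exact Real.sqrt_le_sqrt (by nlinarith [Real.pi_gt_three])

lemma gg_nonneg (x : ℝ) : 0 ≤ gg x := by
  unfold gg; positivity

lemma gg_le (x : ℝ) : gg x ≤ (Real.sqrt (2 * Real.pi))⁻¹ := by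
  unfold gg
  rw [div_eq_mul_inv]
  have h1 : Real.exp (-x ^ 2 / 2) ≤ 1 := Real.exp_le_one_iff.2 (by nlinarith [sq_nonneg x])
  nlinarith [sqrt2pi_pos, inv_pos.2 sqrt2pi_pos, h1, Real.exp_pos (-x^2/2)]

lemma exp_eq (x : ℝ) : Real.exp (-x ^ 2 / 2) = Real.exp (-(1/2) * x ^ 2) := by ring_nf

lemma integrable_gg : Integrable gg := by
  have h : Integrable fun x : ℝ => Real.exp (-(1/2 : ℝ) * x ^ 2) :=
    integrable_exp_neg_mul_sq (by norm_num)
  have := h.div_const (Real.sqrt (2 * Real.pi))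
  refine this.congr ?_
  filter_upwards with x
  rw [gg, exp_eq]

lemma integral_gg : ∫ x : ℝ, gg x = 1 := by
  have h : ∫ x : ℝ, Real.exp (-(1/2 : ℝ) * x ^ 2) = Real.sqrt (2 * Real.pi) := by
    rw [integral_gaussian]
    norm_num
    ring
  have : ∫ x : ℝ, gg x = (∫ x : ℝ, Real.exp (-(1/2 : ℝ) * x ^ 2)) / Real.sqrt (2 * Real.pi) := by
    rw [← integral_div]
    congr 1; funext x; rw [gg, exp_eq]
  rw [this, h, div_self (ne_of_gt sqrt2pi_pos)]

noncomputable def BB (x : ℝ) : ℝ :=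
  (Real.sqrt (2 * Real.pi))⁻¹ * Real.exp (1/2) *
    (Real.exp (-(1/2) * (x - 1) ^ 2) + Real.exp (-(1/2) * (x + 1) ^ 2))

lemma integrable_shift_gauss (c : ℝ) :
    Integrable fun x : ℝ => Real.exp (-(1/2 : ℝ) * (x - c) ^ 2) :=
  (integrable_exp_neg_mul_sq (by norm_num : (0:ℝ) < 1/2)).comp_sub_right c

lemma integral_shift_gauss (c : ℝ) :
    ∫ x : ℝ, Real.exp (-(1/2 : ℝ) * (x - c) ^ 2) = Real.sqrt (2 * Real.pi) := by
  rw [integral_sub_right_eq_self (fun x : ℝ => Real.exp (-(1/2 : ℝ) * x ^ 2)) c,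
    integral_gaussian]
  norm_num
  ring

lemma integrable_BB : Integrable BB := by
  unfold BB
  exact (((integrable_shift_gauss 1).add
    (by simpa using integrable_shift_gauss (-1))).const_mul _)

lemma integral_BB : ∫ x : ℝ, BB x ≤ 4 := by
  unfold BB
  rw [integral_const_mul, integral_add (integrable_shift_gauss 1)
    (by simpa using integrable_shift_gauss (-1))]
  rw [integral_shift_gauss 1,
    show (∫ x : ℝ, Real.exp (-(1/2:ℝ) * (x + 1) ^ 2)) = Real.sqrt (2 * Real.pi) by
      simpa using integral_shift_gauss (-1)]
  have h1 : Real.exp (1/2:ℝ) ≤ 2 := by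
    have hm : Real.exp (1/2:ℝ) * Real.exp (1/2:ℝ) = Real.exp 1 := by
      rw [← Real.exp_add]; norm_num
    nlinarith [Real.exp_one_lt_d9, Real.exp_pos (1/2:ℝ)]
  have h2 : (Real.sqrt (2 * Real.pi))⁻¹ * Real.sqrt (2 * Real.pi) = 1 := by
    field_simp
  nlinarith [Real.sqrt_pos.2 (show (0:ℝ) < 2 * Real.pi by positivity),
    inv_pos.2 (Real.sqrt_pos.2 (show (0:ℝ) < 2 * Real.pi by positivity)),
    Real.exp_pos (1/2:ℝ)]

lemma gg_meas : Measurable gg := by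
  unfold gg; fun_prop

lemma max_le_abs (x : ℝ) : max x 0 ≤ |x| := max_le (le_abs_self x) (abs_nonneg x)

lemma gg_abs_le_BB (x : ℝ) : gg x * |x| ≤ BB x := by
  unfold gg BB
  have hx : |x| ≤ Real.exp x + Real.exp (-x) := by
    rcases le_or_gt 0 x with h | h
    · rw [abs_of_nonneg h]
      nlinarith [Real.add_one_le_exp x, Real.exp_pos (-x)]
    · rw [abs_of_neg h]
      nlinarith [Real.add_one_le_exp (-x), Real.exp_pos x]
  have key : Real.exp (-x ^ 2 / 2) * |x| ≤
      Real.exp (1/2) * (Real.exp (-(1/2) * (x - 1) ^ 2) + Real.exp (-(1/2) * (x + 1) ^ 2)) := by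
    have e1 : Real.exp (-x ^ 2 / 2) * Real.exp x = Real.exp (1/2) * Real.exp (-(1/2) * (x - 1) ^ 2) := by
      rw [← Real.exp_add, ← Real.exp_add]; ring_nf
    have e2 : Real.exp (-x ^ 2 / 2) * Real.exp (-x) = Real.exp (1/2) * Real.exp (-(1/2) * (x + 1) ^ 2) := by
      rw [← Real.exp_add, ← Real.exp_add]; ring_nf
    calc Real.exp (-x ^ 2 / 2) * |x| ≤ Real.exp (-x ^ 2 / 2) * (Real.exp x + Real.exp (-x)) := by
          exact mul_le_mul_of_nonneg_left hx (Real.exp_pos _).le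
      _ = Real.exp (1/2) * (Real.exp (-(1/2) * (x - 1) ^ 2) + Real.exp (-(1/2) * (x + 1) ^ 2)) := by
          rw [mul_add, e1, e2, mul_add]
  calc Real.exp (-x ^ 2 / 2) / Real.sqrt (2 * Real.pi) * |x|
      = (Real.sqrt (2 * Real.pi))⁻¹ * (Real.exp (-x ^ 2 / 2) * |x|) := by
        rw [div_eq_mul_inv]; ring
    _ ≤ (Real.sqrt (2 * Real.pi))⁻¹ *
        (Real.exp (1/2) * (Real.exp (-(1/2) * (x - 1) ^ 2) + Real.exp (-(1/2) * (x + 1) ^ 2))) :=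
        mul_le_mul_of_nonneg_left key (inv_pos.2 sqrt2pi_pos).le
    _ = (Real.sqrt (2 * Real.pi))⁻¹ * Real.exp (1/2) *
        (Real.exp (-(1/2) * (x - 1) ^ 2) + Real.exp (-(1/2) * (x + 1) ^ 2)) := by ring

lemma integrable_gg_abs : Integrable fun x : ℝ => gg x * |x| := by
  apply Integrable.mono' integrable_BB
  · exact (gg_meas.mul measurable_id.abs).aestronglyMeasurable
  · filter_upwards with x
    rw [Real.norm_eq_abs, abs_of_nonneg (mul_nonneg (gg_nonneg x) (abs_nonneg x))]
    exact gg_abs_le_BB x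

lemma integral_gg_abs : ∫ x : ℝ, gg x * |x| ≤ 4 :=
  le_trans (integral_mono integrable_gg_abs integrable_BB gg_abs_le_BB) integral_BB

lemma integrable_gg_max : Integrable fun x : ℝ => gg x * max x 0 := by
  apply Integrable.mono' integrable_gg_abs
  · exact (gg_meas.mul (measurable_id.max measurable_const)).aestronglyMeasurable
  · filter_upwards with x
    rw [Real.norm_eq_abs, abs_of_nonneg (mul_nonneg (gg_nonneg x) (le_max_right x 0))]
    exact mul_le_mul_of_nonneg_left (max_le_abs x) (gg_nonneg x)

lemma integral_gg_max : ∫ x : ℝ, gg x * max x 0 ≤ 4 := by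
  refine le_trans (integral_mono integrable_gg_max integrable_gg_abs fun x => ?_) integral_gg_abs
  exact mul_le_mul_of_nonneg_left (max_le_abs x) (gg_nonneg x)

noncomputable def m0 (u : ℝ) : ℝ := min (Real.log |u|) 0

noncomputable def b0 (u : ℝ) : ℝ :=
  Set.indicator (Set.Icc (-1 : ℝ) 1) (fun u => 2 * |u| ^ (-(1/2) : ℝ)) u

lemma m0_nonpos (u : ℝ) : m0 u ≤ 0 := min_le_right _ _

lemma m0_le_log (u : ℝ) : m0 u ≤ Real.log |u| := min_le_left _ _

lemma m0_eq_zero {u : ℝ} (h : 1 ≤ |u|) : m0 u = 0 :=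
  min_eq_right (Real.log_nonneg h)

lemma abs_m0_le_b0 (u : ℝ) : |m0 u| ≤ b0 u := by
  rcases le_or_gt 1 |u| with h | h
  · rw [m0_eq_zero h, abs_zero]
    exact Set.indicator_nonneg (fun x _ => by positivity) u
  · have hu : u ∈ Set.Icc (-1 : ℝ) 1 := by
      constructor <;> [linarith [neg_abs_le u]; linarith [le_abs_self u]]
    rw [b0, Set.indicator_of_mem hu]
    rcases eq_or_ne u 0 with rfl | hu0
    · simp [m0]
    · have habs : 0 < |u| := abs_pos.2 hu0
      have hlog : Real.log |u| ≤ 0 := Real.log_nonpos habs.le h.le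
      rw [m0, min_eq_left hlog, abs_of_nonpos hlog]
      have h1 : Real.log (|u| ^ (-(1/2) : ℝ)) = -(1/2) * Real.log |u| := Real.log_rpow habs _
      have h2 : Real.log (|u| ^ (-(1/2) : ℝ)) ≤ |u| ^ (-(1/2) : ℝ) := by
        nlinarith [Real.log_le_sub_one_of_pos (Real.rpow_pos_of_pos habs (-(1/2) : ℝ))]
      nlinarith

lemma b0inner_ii01 : IntervalIntegrable (fun u : ℝ => 2 * |u| ^ (-(1/2) : ℝ)) volume 0 1 := by
  have h := (intervalIntegral.intervalIntegrable_rpow' (a := 0) (b := 1)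
    (by norm_num : (-1:ℝ) < -(1/2))).const_mul 2
  apply h.congr
  intro x hx
  rcases Set.mem_uIoc.1 hx with h | h
  · simp only [abs_of_pos h.1]
  · linarith [h.1, h.2]

lemma b0inner_iineg : IntervalIntegrable (fun u : ℝ => 2 * |u| ^ (-(1/2) : ℝ)) volume (-1) 0 := by
  have heven : ∀ u : ℝ, (2 : ℝ) * |(-u)| ^ (-(1/2) : ℝ) = 2 * |u| ^ (-(1/2) : ℝ) := by
    intro u; rw [abs_neg]
  have := ((IntervalIntegrable.iff_comp_neg enorm_ne_top).1 b0inner_ii01)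
  simp only [heven, neg_zero] at this
  exact this.symm

lemma intervalIntegrable_b0inner :
    IntervalIntegrable (fun u : ℝ => 2 * |u| ^ (-(1/2) : ℝ)) volume (-1) 1 :=
  b0inner_iineg.trans b0inner_ii01

lemma int01 : ∫ u in (0:ℝ)..1, 2 * |u| ^ (-(1/2) : ℝ) = 4 := by
  rw [intervalIntegral.integral_congr (g := fun u : ℝ => 2 * u ^ (-(1/2) : ℝ))
    (fun x hx => by
      rw [Set.uIcc_of_le (by norm_num : (0:ℝ) ≤ 1)] at hx
      rw [abs_of_nonneg hx.1])]
  rw [intervalIntegral.integral_const_mul, integral_rpow (Or.inl (by norm_num : (-1:ℝ) < -(1/2)))]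
  norm_num

lemma integrable_b0 : Integrable b0 := by
  unfold b0
  rw [integrable_indicator_iff measurableSet_Icc]
  exact (intervalIntegrable_iff_integrableOn_Icc_of_le (by norm_num)).1 intervalIntegrable_b0inner

lemma integral_b0 : ∫ u : ℝ, b0 u ≤ 8 := by
  unfold b0
  rw [integral_indicator measurableSet_Icc, MeasureTheory.integral_Icc_eq_integral_Ioc,
    ← intervalIntegral.integral_of_le (by norm_num : (-1:ℝ) ≤ 1),
    ← intervalIntegral.integral_add_adjacent_intervals
      (a := (-1:ℝ)) (b := 0) (c := 1) b0inner_iineg b0inner_ii01]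
  have hneg : ∫ u in (-1:ℝ)..0, 2 * |u| ^ (-(1/2) : ℝ) = 4 := by
    have : ∫ u in (-1:ℝ)..0, 2 * |u| ^ (-(1/2) : ℝ)
        = ∫ u in (-1:ℝ)..0, (fun v : ℝ => 2 * |v| ^ (-(1/2) : ℝ)) (-u) := by
      congr 1; funext u; simp
    rw [this, intervalIntegral.integral_comp_neg (fun v : ℝ => 2 * |v| ^ (-(1/2) : ℝ))]
    simpa using int01
  rw [hneg, int01]
  norm_num

lemma m0_meas : Measurable m0 := by
  unfold m0
  exact (Real.measurable_log.comp measurable_id.abs).min measurable_const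

lemma integrable_m0 : Integrable m0 := by
  apply Integrable.mono' integrable_b0 m0_meas.aestronglyMeasurable
  filter_upwards with u
  rw [Real.norm_eq_abs]
  exact abs_m0_le_b0 u

lemma integral_m0_ge : -8 ≤ ∫ u : ℝ, m0 u := by
  have h : ∫ u : ℝ, -(b0 u) ≤ ∫ u : ℝ, m0 u := by
    apply integral_mono integrable_b0.neg integrable_m0
    intro u
    simp only [Pi.neg_apply]
    linarith [abs_m0_le_b0 u, neg_abs_le (m0 u)]
  rw [integral_neg] at h
  linarith [integral_b0]

lemma integrable_m0_shift (t : ℝ) : Integrable fun x : ℝ => m0 (x - t) :=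
  integrable_m0.comp_sub_right t

lemma integral_m0_shift (t : ℝ) : ∫ x : ℝ, m0 (x - t) = ∫ u : ℝ, m0 u :=
  integral_sub_right_eq_self m0 t

lemma m0_def (u : ℝ) : m0 u = min (Real.log |u|) 0 := rfl

lemma gg_even (x : ℝ) : gg (-x) = gg x := by
  unfold gg
  rw [neg_sq]

-- log⁺ helper: if 0 ≤ a ≤ c * b with 1 ≤ c then log⁺ a ≤ log c + log⁺ b
lemma logplus_le {a b c : ℝ} (ha : 0 ≤ a) (hc : 1 ≤ c) (h : a ≤ c * b) :
    max (Real.log a) 0 ≤ Real.log c + max (Real.log b) 0 := by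
  have hlc : 0 ≤ Real.log c := Real.log_nonneg hc
  rcases le_or_gt a 1 with h1 | h1
  · have : max (Real.log a) 0 = 0 := max_eq_right (Real.log_nonpos ha h1)
    rw [this]
    positivity
  · have ha0 : 0 < a := lt_trans one_pos h1
    have hb : 0 < b := by nlinarith
    have : Real.log a ≤ Real.log c + Real.log b := by
      calc Real.log a ≤ Real.log (c * b) := Real.log_le_log ha0 h
        _ = Real.log c + Real.log b := Real.log_mul (by linarith) (ne_of_gt hb)
    rw [max_eq_left (le_of_lt (Real.log_pos h1))]
    calc Real.log a ≤ Real.log c + Real.log b := this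
      _ ≤ Real.log c + max (Real.log b) 0 := by linarith [le_max_left (Real.log b) (0:ℝ)]

-- pointwise upper bound on log |x - z|
lemma log_abs_le (z : ℂ) (x : ℝ) :
    Real.log (‖(x : ℂ) - z‖) ≤
      |x| + (max (Real.log (‖z‖)) 0 + Real.log 2) := by
  set M : ℝ := max 1 (‖z‖) with hM
  have hM1 : 1 ≤ M := le_max_left _ _
  have hbound : ‖(x : ℂ) - z‖ ≤ 2 * M * (1 + |x|) := by
    calc ‖(x : ℂ) - z‖ ≤ ‖(x : ℂ)‖ + ‖z‖ :=
          (norm_sub_le _ _)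
      _ = |x| + ‖z‖ := by rw [Complex.norm_real, Real.norm_eq_abs]
      _ ≤ 2 * M * |x| + 2 * M := by
          have h1 : ‖z‖ ≤ M := le_max_right _ _
          nlinarith [abs_nonneg x]
      _ = 2 * M * (1 + |x|) := by ring
  have hpos : (0:ℝ) < 2 * M * (1 + |x|) := by positivity
  have hlogs : Real.log (2 * M * (1 + |x|)) = Real.log 2 + Real.log M + Real.log (1 + |x|) := by
    rw [Real.log_mul (by positivity) (by positivity), Real.log_mul (by norm_num) (by positivity)]
  have hlogM : Real.log M = max (Real.log (‖z‖)) 0 := by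
    rcases le_or_gt (‖z‖) 1 with h | h
    · rw [hM, max_eq_left h, Real.log_one]
      exact (max_eq_right (Real.log_nonpos (norm_nonneg z) h)).symm
    · rw [hM, max_eq_right h.le]
      exact (max_eq_left (Real.log_pos h).le).symm
  have hlog1x : Real.log (1 + |x|) ≤ |x| := by
    nlinarith [Real.log_le_sub_one_of_pos (show (0:ℝ) < 1 + |x| by positivity)]
  have hmain : Real.log (‖(x : ℂ) - z‖) ≤ Real.log (2 * M * (1 + |x|)) := by
    rcases eq_or_lt_of_le (norm_nonneg ((x : ℂ) - z)) with h | h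
    · rw [← h, Real.log_zero]
      exact Real.log_nonneg (by nlinarith [abs_nonneg x])
    · exact Real.log_le_log h hbound
  rw [hlogs, hlogM] at hmain
  linarith

lemma ae_ne_re (t : ℝ) : ∀ᵐ x : ℝ, x ≠ t := by
  rw [ae_iff]
  have h : {x : ℝ | ¬ x ≠ t} = {t} := by ext x; simp
  rw [h]
  exact measure_singleton t

lemma meas_main (z : ℂ) : Measurable fun x : ℝ => gg x * Real.log (‖(x : ℂ) - z‖) :=
  gg_meas.mul (Real.measurable_log.comp
    (continuous_norm.comp (Complex.continuous_ofReal.sub continuous_const)).measurable)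

lemma abs_sub_re_le (z : ℂ) (x : ℝ) : |x - z.re| ≤ ‖(x : ℂ) - z‖ := by
  have := Complex.abs_re_le_norm ((x : ℂ) - z)
  simpa [Complex.sub_re, Complex.ofReal_re] using this

lemma m0_le_L (z : ℂ) (x : ℝ) (hx : x ≠ z.re) :
    m0 (x - z.re) ≤ Real.log (‖(x : ℂ) - z‖) := by
  have h1 : (0:ℝ) < |x - z.re| := abs_pos.2 (sub_ne_zero.2 hx)
  calc m0 (x - z.re) ≤ Real.log |x - z.re| := m0_le_log _
    _ ≤ Real.log (‖(x : ℂ) - z‖) := Real.log_le_log h1 (abs_sub_re_le z x)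

lemma integrable_main (z : ℂ) :
    Integrable fun x : ℝ => gg x * Real.log (‖(x : ℂ) - z‖) := by
  set c : ℝ := max (Real.log (‖z‖)) 0 + Real.log 2 with hc
  clear_value c
  have hc0 : 0 ≤ c := by
    rw [hc]
    have := Real.log_nonneg (by norm_num : (1:ℝ) ≤ 2)
    positivity
  have hD : Integrable fun x : ℝ =>
      gg x * |x| + c * gg x + (Real.sqrt (2 * Real.pi))⁻¹ * (-(m0 (x - z.re))) :=
    (integrable_gg_abs.add (integrable_gg.const_mul c)).add
      (((integrable_m0_shift z.re).neg).const_mul _)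
  apply Integrable.mono' hD (meas_main z).aestronglyMeasurable
  filter_upwards [ae_ne_re z.re] with x hx
  set L : ℝ := Real.log (‖(x : ℂ) - z‖) with hL
  clear_value L
  show ‖gg x * L‖ ≤ gg x * |x| + c * gg x + (Real.sqrt (2 * Real.pi))⁻¹ * (-(m0 (x - z.re)))
  have hnorm : ‖gg x * L‖ = gg x * |L| := by
    rw [Real.norm_eq_abs, abs_mul, abs_of_nonneg (gg_nonneg x)]
  rw [hnorm]
  have hm0 : 0 ≤ (Real.sqrt (2 * Real.pi))⁻¹ * (-(m0 (x - z.re))) := by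
    have := m0_nonpos (x - z.re)
    have h2 := inv_pos.2 sqrt2pi_pos
    nlinarith
  rcases le_or_gt 0 L with h | h
  · rw [abs_of_nonneg h]
    have hlog : L ≤ |x| + c := by rw [hL, hc]; exact log_abs_le z x
    have h1 : gg x * L ≤ gg x * (|x| + c) :=
      mul_le_mul_of_nonneg_left hlog (gg_nonneg x)
    nlinarith [gg_nonneg x]
  · rw [abs_of_neg h]
    have h1 : m0 (x - z.re) ≤ L := by rw [hL]; exact m0_le_L z x hx
    have h2 : gg x * -L ≤ (Real.sqrt (2 * Real.pi))⁻¹ * (-(m0 (x - z.re))) := by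
      apply mul_le_mul (gg_le x) (by linarith) (by linarith) (inv_pos.2 sqrt2pi_pos).le
    have h3 : 0 ≤ gg x * |x| := mul_nonneg (gg_nonneg x) (abs_nonneg x)
    have h4 : 0 ≤ c * gg x := mul_nonneg hc0 (gg_nonneg x)
    refine le_trans h2 ?_
    linarith

lemma upper_bound (z : ℂ) :
    ∫ x : ℝ, gg x * Real.log (‖(x : ℂ) - z‖) ≤
      max (Real.log (‖z‖)) 0 + 5 := by
  set c : ℝ := max (Real.log (‖z‖)) 0 + Real.log 2 with hc
  clear_value c
  have h1 : ∫ x : ℝ, gg x * Real.log (‖(x : ℂ) - z‖) ≤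
      ∫ x : ℝ, (gg x * |x| + c * gg x) := by
    apply integral_mono (integrable_main z) (integrable_gg_abs.add (integrable_gg.const_mul c))
    intro x
    have := mul_le_mul_of_nonneg_left (log_abs_le z x) (gg_nonneg x)
    simp only [Pi.add_apply]
    nlinarith [gg_nonneg x]
  rw [integral_add integrable_gg_abs (integrable_gg.const_mul c), integral_const_mul,
    integral_gg] at h1
  have hlog2 : Real.log 2 ≤ 1 := by
    nlinarith [Real.log_le_sub_one_of_pos (show (0:ℝ) < 2 by norm_num)]
  calc ∫ x : ℝ, gg x * Real.log (‖(x : ℂ) - z‖) ≤ 4 + c * 1 := by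
        linarith [integral_gg_abs]
    _ ≤ max (Real.log (‖z‖)) 0 + 5 := by rw [hc]; linarith


lemma integrable_real (t : ℝ) : Integrable fun x : ℝ => gg x * Real.log |x - t| := by
  have h := integrable_main (t : ℂ)
  have he : (fun x : ℝ => gg x * Real.log (‖(x : ℂ) - (t : ℂ)‖))
      = fun x : ℝ => gg x * Real.log |x - t| := by
    funext x
    rw [← Complex.ofReal_sub, Complex.norm_real, Real.norm_eq_abs]
  rwa [he] at h

lemma pt_small (t x : ℝ) :
    (Real.sqrt (2 * Real.pi))⁻¹ * m0 (x - t) ≤ gg x * Real.log |x - t| := by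
  rcases le_or_gt 0 (Real.log |x - t|) with h | h
  · have h1 := m0_nonpos (x - t)
    have h2 := inv_pos.2 sqrt2pi_pos
    nlinarith [gg_nonneg x]
  · have hm : m0 (x - t) = Real.log |x - t| := by rw [m0_def]; exact min_eq_left h.le
    rw [hm]
    exact mul_le_mul_of_nonpos_right (gg_le x) h.le

lemma inv_sqrt2pi_le_one : (Real.sqrt (2 * Real.pi))⁻¹ ≤ 1 :=
  inv_le_one_of_one_le₀ one_le_sqrt2pi

lemma real_lower_nonneg (t : ℝ) (ht : 0 ≤ t) :
    max (Real.log |t|) 0 - 16 ≤ ∫ x : ℝ, gg x * Real.log |x - t| := by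
  rcases lt_or_ge t 2 with ht2 | ht2
  · -- small case
    have hint := integral_mono ((integrable_m0_shift t).const_mul ((Real.sqrt (2 * Real.pi))⁻¹))
      (integrable_real t) (fun x => pt_small t x)
    rw [integral_const_mul] at hint
    have h8 : -8 ≤ (Real.sqrt (2 * Real.pi))⁻¹ * ∫ x : ℝ, m0 (x - t) := by
      rw [integral_m0_shift]
      nlinarith [integral_m0_ge, inv_sqrt2pi_le_one, inv_pos.2 sqrt2pi_pos,
        integrable_m0.neg]
    have hlog : max (Real.log |t|) 0 ≤ 1 := by
      have := logplus_le (a := |t|) (b := 1) (c := 2) (abs_nonneg t) (by norm_num)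
        (by rw [abs_of_nonneg ht]; linarith)
      have hl2 : Real.log 2 ≤ 1 := by
        nlinarith [Real.log_le_sub_one_of_pos (show (0:ℝ) < 2 by norm_num)]
      rw [Real.log_one, max_self, add_zero] at this
      linarith
    linarith
  · -- large case
    have h1t : (1:ℝ) ≤ t / 2 := by linarith
    have hlogt2 : Real.log t - Real.log 2 = Real.log (t / 2) :=
      (Real.log_div (by linarith) (by norm_num)).symm
    have hpt : ∀ x : ℝ,
        gg x * (Real.log t - Real.log 2) + (Real.sqrt (2 * Real.pi))⁻¹ * m0 (x - t)
          - gg x * max x 0 ≤ gg x * Real.log |x - t| := by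
      intro x
      rcases lt_or_ge x (t / 2) with hx | hx
      · have habs : t / 2 < |x - t| := by
          rw [abs_of_neg (by linarith : x - t < 0)]
          linarith
        have hm : m0 (x - t) = 0 := m0_eq_zero (by linarith [habs])
        have hlogle : Real.log (t / 2) ≤ Real.log |x - t| :=
          Real.log_le_log (by linarith) habs.le
        have h2 := mul_le_mul_of_nonneg_left hlogle (gg_nonneg x)
        have hmax : 0 ≤ gg x * max x 0 := mul_nonneg (gg_nonneg x) (le_max_right _ _)
        rw [hm, mul_zero, hlogt2]
        linarith
      · have hmax : max x 0 = x := max_eq_left (by linarith)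
        have hx2 : Real.log (t / 2) ≤ x := by
          nlinarith [Real.log_le_sub_one_of_pos (show (0:ℝ) < t / 2 by linarith)]
        have h2 : gg x * (Real.log t - Real.log 2 - x) ≤ 0 := by
          rw [hlogt2]
          exact mul_nonpos_of_nonneg_of_nonpos (gg_nonneg x) (by linarith)
        have h3 := pt_small t x
        have hdist : gg x * (Real.log t - Real.log 2) - gg x * x
            = gg x * (Real.log t - Real.log 2 - x) := by ring
        rw [hmax]
        linarith
    have hint1 : Integrable fun x : ℝ =>
        gg x * (Real.log t - Real.log 2) + (Real.sqrt (2 * Real.pi))⁻¹ * m0 (x - t) := by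
      exact (integrable_gg.mul_const _).add ((integrable_m0_shift t).const_mul _)
    have hint2 : Integrable fun x : ℝ => gg x * (Real.log t - Real.log 2) := by
      exact integrable_gg.mul_const _
    have hint3 : Integrable fun x : ℝ => (Real.sqrt (2 * Real.pi))⁻¹ * m0 (x - t) := by
      exact (integrable_m0_shift t).const_mul _
    have hintL : Integrable fun x : ℝ =>
        gg x * (Real.log t - Real.log 2) + (Real.sqrt (2 * Real.pi))⁻¹ * m0 (x - t)
          - gg x * max x 0 := by
      exact hint1.sub integrable_gg_max
    have hint := integral_mono hintL (integrable_real t) hpt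
    rw [integral_sub hint1 integrable_gg_max,
      integral_add hint2 hint3,
      integral_mul_const, integral_gg, integral_const_mul, integral_m0_shift] at hint
    have h8 : -8 ≤ (Real.sqrt (2 * Real.pi))⁻¹ * ∫ u : ℝ, m0 u := by
      nlinarith [integral_m0_ge, inv_sqrt2pi_le_one, inv_pos.2 sqrt2pi_pos]
    have hl2 : Real.log 2 ≤ 1 := by
      nlinarith [Real.log_le_sub_one_of_pos (show (0:ℝ) < 2 by norm_num)]
    have hmaxeq : max (Real.log |t|) 0 = Real.log t := by
      rw [abs_of_nonneg ht]
      exact max_eq_left (Real.log_nonneg (by linarith))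
    rw [hmaxeq]
    linarith [integral_gg_max]

lemma real_lower (t : ℝ) :
    max (Real.log |t|) 0 - 16 ≤ ∫ x : ℝ, gg x * Real.log |x - t| := by
  rcases le_or_gt 0 t with ht | ht
  · exact real_lower_nonneg t ht
  · have hsym : ∫ x : ℝ, gg x * Real.log |x - t|
        = ∫ x : ℝ, gg x * Real.log |x - (-t)| := by
      rw [← MeasureTheory.integral_neg_eq_self (fun x : ℝ => gg x * Real.log |x - (-t)|) volume]
      congr 1
      funext x
      rw [gg_even]
      congr 2
      rw [show -x - -t = -(x - t) by ring, abs_neg]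
    rw [hsym]
    have := real_lower_nonneg (-t) (by linarith)
    rwa [abs_neg] at this


lemma sqrt_two_facts : (1:ℝ) ≤ Real.sqrt 2 ∧ Real.log (Real.sqrt 2) ≤ 1 := by
  have h2 : (0:ℝ) ≤ 2 := by norm_num
  have hs := Real.sq_sqrt h2
  have hn := Real.sqrt_nonneg 2
  constructor
  · nlinarith
  · nlinarith [Real.log_le_sub_one_of_pos (show (0:ℝ) < Real.sqrt 2 by nlinarith)]

lemma comp_abs_le (z : ℂ) (h : |z.im| ≤ |z.re|) :
    ‖z‖ ≤ Real.sqrt 2 * |z.re| := by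
  rw [Complex.norm_def, Complex.normSq_apply]
  have h1 : z.re * z.re + z.im * z.im ≤ 2 * (z.re * z.re) := by
    nlinarith [abs_mul_abs_self z.im, abs_mul_abs_self z.re,
      mul_self_le_mul_self (abs_nonneg z.im) h]
  calc Real.sqrt (z.re * z.re + z.im * z.im) ≤ Real.sqrt (2 * (z.re * z.re)) :=
        Real.sqrt_le_sqrt h1
    _ = Real.sqrt 2 * |z.re| := by
        rw [Real.sqrt_mul (by norm_num), show z.re * z.re = z.re ^ 2 by ring,
          Real.sqrt_sq_eq_abs]

lemma comp_abs_le' (z : ℂ) (h : |z.re| ≤ |z.im|) :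
    ‖z‖ ≤ Real.sqrt 2 * |z.im| := by
  rw [Complex.norm_def, Complex.normSq_apply]
  have h1 : z.re * z.re + z.im * z.im ≤ 2 * (z.im * z.im) := by
    nlinarith [mul_self_le_mul_self (abs_nonneg z.re) h, abs_mul_abs_self z.im,
      abs_mul_abs_self z.re]
  calc Real.sqrt (z.re * z.re + z.im * z.im) ≤ Real.sqrt (2 * (z.im * z.im)) :=
        Real.sqrt_le_sqrt h1
    _ = Real.sqrt 2 * |z.im| := by
        rw [Real.sqrt_mul (by norm_num), show z.im * z.im = z.im ^ 2 by ring,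
          Real.sqrt_sq_eq_abs]

lemma step_real_le (z : ℂ) :
    ∫ x : ℝ, gg x * Real.log |x - z.re| ≤
      ∫ x : ℝ, gg x * Real.log (‖(x : ℂ) - z‖) := by
  apply integral_mono_ae (integrable_real z.re) (integrable_main z)
  filter_upwards [ae_ne_re z.re] with x hx
  have h1 : (0:ℝ) < |x - z.re| := abs_pos.2 (sub_ne_zero.2 hx)
  exact mul_le_mul_of_nonneg_left
    (Real.log_le_log h1 (abs_sub_re_le z x)) (gg_nonneg x)

lemma lower_bound (z : ℂ) :
    max (Real.log (‖z‖)) 0 - 18 ≤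
      ∫ x : ℝ, gg x * Real.log (‖(x : ℂ) - z‖) := by
  obtain ⟨hs1, hs2⟩ := sqrt_two_facts
  have hchain : max (Real.log |z.re|) 0 - 16 ≤
      ∫ x : ℝ, gg x * Real.log (‖(x : ℂ) - z‖) :=
    le_trans (real_lower z.re) (step_real_le z)
  rcases le_or_gt (|z.im|) (|z.re|) with him | him
  · have habs := comp_abs_le z him
    have hlp := logplus_le (norm_nonneg z) hs1 habs
    linarith
  · rcases le_or_gt (‖z‖) 2 with hz2 | hz2
    · have hlp : max (Real.log (‖z‖)) 0 ≤ 1 := by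
        have h := logplus_le (a := ‖z‖) (b := 1) (c := 2)
          (norm_nonneg z) (by norm_num) (by linarith)
        rw [Real.log_one, max_self, add_zero] at h
        have hl2 : Real.log 2 ≤ 1 := by
          nlinarith [Real.log_le_sub_one_of_pos (show (0:ℝ) < 2 by norm_num)]
        linarith
      have h0 : (0:ℝ) ≤ max (Real.log |z.re|) 0 := le_max_right _ _
      linarith
    · -- |z| > 2, |im| ≥ |z|/√2
      have habs := comp_abs_le' z him.le
      have hsp : (0:ℝ) < Real.sqrt 2 := by linarith
      have hquot : ‖z‖ / Real.sqrt 2 ≤ |z.im| := by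
        rw [div_le_iff₀ hsp]
        linarith [habs, mul_comm (Real.sqrt 2) |z.im|]
      have hqpos : (0:ℝ) < ‖z‖ / Real.sqrt 2 := by positivity
      have hpt : ∀ x : ℝ, gg x * Real.log (‖z‖ / Real.sqrt 2) ≤
          gg x * Real.log (‖(x : ℂ) - z‖) := by
        intro x
        apply mul_le_mul_of_nonneg_left _ (gg_nonneg x)
        apply Real.log_le_log hqpos
        calc ‖z‖ / Real.sqrt 2 ≤ |z.im| := hquot
          _ = |((x : ℂ) - z).im| := by rw [Complex.sub_im, Complex.ofReal_im, zero_sub, abs_neg]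
          _ ≤ ‖(x : ℂ) - z‖ := Complex.abs_im_le_norm _
      have hint : Integrable fun x : ℝ => gg x * Real.log (‖z‖ / Real.sqrt 2) := by
        exact integrable_gg.mul_const _
      have h := integral_mono hint (integrable_main z) hpt
      rw [integral_mul_const, integral_gg, one_mul] at h
      have hlogq : Real.log (‖z‖ / Real.sqrt 2)
          = Real.log (‖z‖) - Real.log (Real.sqrt 2) :=
        Real.log_div (by linarith) (by linarith)
      have hmx : max (Real.log (‖z‖)) 0 = Real.log (‖z‖) :=
        max_eq_left (Real.log_nonneg (by linarith))
      rw [hlogq] at h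
      rw [hmx]
      linarith

theorem stmt8 :
    ∃ C : ℝ, 0 < C ∧ ∀ z : ℂ,
      |(∫ x : ℝ, (Real.exp (-x ^ 2 / 2) / Real.sqrt (2 * Real.pi)) *
          Real.log ‖(x : ℂ) - z‖) -
        max (Real.log ‖z‖) 0| ≤ C := by
  refine ⟨20, by norm_num, fun z => ?_⟩
  have heq : (∫ x : ℝ, (Real.exp (-x ^ 2 / 2) / Real.sqrt (2 * Real.pi)) *
      Real.log (‖(x : ℂ) - z‖))
      = ∫ x : ℝ, gg x * Real.log (‖(x : ℂ) - z‖) := rfl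
  rw [heq, abs_le]
  constructor
  · linarith [lower_bound z]
  · linarith [upper_bound z]
end

section
/- For every interval J ⊆ ℝ of positive length, (1/|J|) ∫_J log⁻|x| dx ≥ 2(max_{x ∈ J} log⁻|x| − 1), where log⁻ y = min(log y, 0) for y > 0 and log⁻ 0 = −∞ is not attained on a set of positive measure. -/
open MeasureTheory Set

noncomputable def G10 : ℝ → ℝ := fun x => x * min (Real.log x) 0 - max (-1) (min x 1)

lemma key10 {v : ℝ} (hv : 0 < v) : v - 1 ≤ v * Real.log v := by
  have h := Real.log_le_sub_one_of_pos (inv_pos.mpr hv)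
  rw [Real.log_inv] at h
  have hv' : v ≠ 0 := ne_of_gt hv
  have : v * (-Real.log v) ≤ v * (v⁻¹ - 1) := by
    apply mul_le_mul_of_nonneg_left h hv.le
  rw [mul_sub, mul_inv_cancel₀ hv'] at this
  nlinarith

lemma min_log_eq {x : ℝ} (hx : |x| ≤ 1) : min (Real.log x) 0 = Real.log x := by
  rw [← Real.log_abs]
  exact min_eq_left (Real.log_nonpos (abs_nonneg x) hx)

lemma min_log_eq0 {x : ℝ} (hx : 1 ≤ |x|) : min (Real.log x) 0 = 0 := by
  rw [← Real.log_abs]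
  exact min_eq_right (Real.log_nonneg hx)

lemma contG10 : Continuous G10 := by
  have h1 : Continuous fun x : ℝ => x * min (Real.log x) 0 := by
    rw [continuous_iff_continuousAt]
    intro x
    rcases eq_or_ne x 0 with rfl | hx
    · have h0 : (fun x : ℝ => x * min (Real.log x) 0) 0 = 0 := by simp
      unfold ContinuousAt
      rw [h0]
      apply squeeze_zero_norm (a := fun t : ℝ => |t * Real.log t|)
      · intro t
        rw [Real.norm_eq_abs, abs_mul, abs_mul]
        apply mul_le_mul_of_nonneg_left _ (abs_nonneg t)
        rcases le_total (Real.log t) 0 with h | h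
        · rw [min_eq_left h]
        · rw [min_eq_right h]
          simpa using abs_nonneg (Real.log t)
      · have := (Real.continuous_mul_log.abs).tendsto 0
        simpa using this
    · exact continuousAt_id.mul ((Real.continuousAt_log hx).min continuousAt_const)
  exact h1.sub (continuous_const.max (continuous_id.min continuous_const))

lemma Gval_small {x : ℝ} (hx : |x| ≤ 1) : G10 x = x * Real.log x - x := by
  have h := abs_le.mp hx
  simp only [G10, min_log_eq hx]
  rw [min_eq_left h.2, max_eq_right h.1]

lemma Gval_big_pos {x : ℝ} (hx : 1 ≤ x) : G10 x = -1 := by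
  have h1 : 1 ≤ |x| := le_trans hx (le_abs_self x)
  simp only [G10, min_log_eq0 h1]
  rw [min_eq_right hx, max_eq_right (by norm_num : (-1:ℝ) ≤ 1)]
  ring

lemma Gval_big_neg {x : ℝ} (hx : x ≤ -1) : G10 x = 1 := by
  have h1 : 1 ≤ |x| := by rw [abs_of_nonpos (by linarith)]; linarith
  simp only [G10, min_log_eq0 h1]
  rw [min_eq_left (by linarith : x ≤ 1), max_eq_left (by linarith : x ≤ -1)]
  ring

lemma derivG10 {x : ℝ} (h0 : x ≠ 0) (h1 : x ≠ 1) (h2 : x ≠ -1) :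
    HasDerivAt G10 (min (Real.log x) 0) x := by
  have habs : |x| ≠ 1 := by
    intro h
    rcases abs_eq (by norm_num : (0:ℝ) ≤ 1) |>.mp h with h | h
    · exact h1 h
    · exact h2 h
  rcases lt_or_gt_of_ne habs with hlt | hgt
  · -- |x| < 1
    have hev : G10 =ᶠ[nhds x] fun y => y * Real.log y - y := by
      have hs : IsOpen {y : ℝ | |y| < 1} := isOpen_lt continuous_abs continuous_const
      filter_upwards [hs.mem_nhds hlt] with y hy
      exact Gval_small (le_of_lt hy)
    have hd : HasDerivAt (fun y : ℝ => y * Real.log y - y) (Real.log x + 1 - 1) x :=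
      (Real.hasDerivAt_mul_log h0).sub (hasDerivAt_id x)
    have := hd.congr_of_eventuallyEq hev
    have heq : min (Real.log x) 0 = Real.log x + 1 - 1 := by
      rw [min_log_eq hlt.le]; ring
    rwa [heq]
  · -- 1 < |x|
    rcases le_or_gt 0 x with hx0 | hx0
    · have hx1 : 1 < x := by rwa [abs_of_nonneg hx0] at hgt
      have hev : G10 =ᶠ[nhds x] fun _ => (-1 : ℝ) := by
        have hs : IsOpen {y : ℝ | 1 < y} := isOpen_lt continuous_const continuous_id
        filter_upwards [hs.mem_nhds hx1] with y hy
        exact Gval_big_pos (le_of_lt hy)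
      have := (hasDerivAt_const x (-1 : ℝ)).congr_of_eventuallyEq hev
      rwa [min_log_eq0 hgt.le]
    · have hx1 : x < -1 := by rw [abs_of_neg hx0] at hgt; linarith
      have hev : G10 =ᶠ[nhds x] fun _ => (1 : ℝ) := by
        have hs : IsOpen {y : ℝ | y < -1} := isOpen_lt continuous_id continuous_const
        filter_upwards [hs.mem_nhds hx1] with y hy
        exact Gval_big_neg (le_of_lt hy)
      have := (hasDerivAt_const x (1 : ℝ)).congr_of_eventuallyEq hev
      rwa [min_log_eq0 hgt.le]

lemma intf10 (a b : ℝ) : IntervalIntegrable (fun x => min (Real.log x) 0) volume a b := by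
  have base : ∀ c : ℝ, 0 ≤ c → IntervalIntegrable (fun x => min (Real.log x) 0) volume 0 c := by
    intro c hc
    have hg : IntervalIntegrable (fun x : ℝ => 2 * x ^ (-(1:ℝ)/2)) volume 0 c :=
      (intervalIntegral.intervalIntegrable_rpow' (by norm_num)).const_mul 2
    refine hg.mono_fun ?_ ?_
    · exact (Real.measurable_log.min measurable_const).aestronglyMeasurable
    · rw [uIoc_of_le hc]
      refine (ae_restrict_iff' measurableSet_Ioc).mpr (ae_of_all _ ?_)
      intro x hx
      have hx0 : 0 < x := hx.1
      have hrp : 0 < x ^ (-(1:ℝ)/2) := Real.rpow_pos_of_pos hx0 _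
      show ‖min (Real.log x) 0‖ ≤ ‖2 * x ^ (-(1:ℝ)/2)‖
      rw [Real.norm_eq_abs, Real.norm_eq_abs,
        abs_of_nonneg (by positivity : (0:ℝ) ≤ 2 * x ^ (-(1:ℝ)/2))]
      rcases le_total (Real.log x) 0 with h | h
      · rw [min_eq_left h, abs_of_nonpos h]
        have h2 : Real.log (x ^ (-(1:ℝ)/2)) ≤ x ^ (-(1:ℝ)/2) - 1 :=
          Real.log_le_sub_one_of_pos hrp
        rw [Real.log_rpow hx0] at h2
        nlinarith
      · rw [min_eq_right h]
        simpa using (by positivity : (0:ℝ) ≤ 2 * x ^ (-(1:ℝ)/2))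
  have base' : ∀ c : ℝ, IntervalIntegrable (fun x => min (Real.log x) 0) volume 0 c := by
    intro c
    rcases le_total 0 c with h | h
    · exact base c h
    · have h2 := base (-c) (by linarith)
      rw [IntervalIntegrable.iff_comp_neg] at h2
      simpa [Real.log_neg_eq_log] using h2
  exact (base' a).symm.trans (base' b)

lemma ftc10 (a b : ℝ) : (∫ x in a..b, min (Real.log x) 0) = G10 b - G10 a := by
  apply integral_eq_of_hasDerivAt_off_countable G10 (fun x => min (Real.log x) 0)
    (s := {0, 1, -1})
    (((Set.countable_singleton (-1:ℝ)).insert 1).insert 0)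
  · exact contG10.continuousOn
  · intro x hx
    obtain ⟨-, hx2⟩ := hx
    simp only [Set.mem_insert_iff, Set.mem_singleton_iff, not_or] at hx2
    exact derivG10 hx2.1 hx2.2.1 hx2.2.2
  · exact intf10 a b

lemma caseIIa {a b : ℝ} (hb : 0 < b) (hb1 : b ≤ 1) (ha0 : 0 ≤ a) (hab : a < b) :
    2 * (b - a) * (Real.log b - 1) ≤ (b * Real.log b - b) - (a * Real.log a - a) := by
  have hlb : Real.log b ≤ 0 := Real.log_nonpos hb.le hb1
  rcases eq_or_lt_of_le ha0 with h | h
  · have hblb : b * Real.log b ≤ 0 := mul_nonpos_of_nonneg_of_nonpos hb.le hlb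
    rw [← h]
    simp only [Real.log_zero, mul_zero, zero_mul, sub_zero]
    nlinarith
  · have hla : Real.log a ≤ Real.log b := Real.log_le_log h hab.le
    nlinarith [mul_nonneg ha0 (sub_nonneg.mpr hla),
      mul_nonneg (sub_nonneg.mpr hab.le) (by linarith : (0:ℝ) ≤ 1 - Real.log b)]

lemma caseIIb {b u : ℝ} (hb : 0 < b) (hb1 : b ≤ 1) (hu0 : 0 < u) (hub : u ≤ b) :
    2 * (b + u) * (Real.log b - 1) ≤ (b * Real.log b - b) - (u - u * Real.log u) := by
  have hlb : Real.log b ≤ 0 := Real.log_nonpos hb.le hb1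
  set t : ℝ := 1 - 2 * Real.log b with ht
  have hE : 0 < Real.exp t := Real.exp_pos t
  have hv := key10 (mul_pos hu0 hE)
  rw [Real.log_mul (ne_of_gt hu0) (ne_of_gt hE), Real.log_exp] at hv
  -- hv : u * exp t - 1 ≤ u * exp t * (log u + t)
  have hbt : b ^ 2 * Real.exp t = Real.exp 1 := by
    have h2 : Real.exp (2 * Real.log b) = b ^ 2 := by
      rw [two_mul, Real.exp_add, Real.exp_log hb]; ring
    rw [ht, Real.exp_sub, h2]
    field_simp
  have he1 : (2:ℝ) ≤ Real.exp 1 := by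
    have := Real.add_one_le_exp (1:ℝ)
    linarith
  -- From b ≤ 1 : exp 1 ≤ exp t * b
  have hEb : Real.exp 1 ≤ Real.exp t * b := by
    nlinarith [mul_nonneg (mul_nonneg hE.le hb.le) (sub_nonneg.mpr hb1)]
  have h3 : 0 ≤ Real.exp t * (b - b * Real.log b + u * (Real.log u + t)) := by
    nlinarith [mul_nonneg (mul_nonneg hE.le hb.le) (neg_nonneg.mpr hlb),
      mul_pos hE hu0]
  have h4 : 0 ≤ b - b * Real.log b + u * (Real.log u + t) :=
    (mul_nonneg_iff_of_pos_left hE).mp h3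
  rw [ht] at h4
  nlinarith

lemma coreA {a b : ℝ} (hb : 0 < b) (hba : -b ≤ a) (hab : a < b) :
    2 * (b - a) * (min (Real.log b) 0 - 1) ≤ G10 b - G10 a := by
  rcases le_or_gt 1 b with h1 | h1
  · -- b ≥ 1
    rw [min_log_eq0 (by rwa [abs_of_pos hb]), Gval_big_pos h1]
    rcases le_or_gt 1 a with ha1 | ha1
    · rw [Gval_big_pos ha1]; nlinarith
    rcases le_or_gt a (-1) with ha2 | ha2
    · rw [Gval_big_neg ha2]; nlinarith
    · rw [Gval_small (abs_le.mpr ⟨ha2.le, ha1.le⟩)]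
      rcases le_or_gt 0 a with ha0 | ha0
      · have hl : Real.log a ≤ 0 := by
          rw [← Real.log_abs]
          exact Real.log_nonpos (abs_nonneg a) (abs_le.mpr ⟨ha2.le, ha1.le⟩)
        have : a * Real.log a ≤ 0 := mul_nonpos_of_nonneg_of_nonpos ha0 hl
        nlinarith
      · have hu : (0:ℝ) < -a := by linarith
        have hk := key10 hu
        rw [Real.log_neg_eq_log] at hk
        nlinarith
  · -- 0 < b < 1
    have hbabs : |b| ≤ 1 := by rw [abs_of_pos hb]; exact h1.le
    have hminb : min (Real.log b) 0 = Real.log b := min_log_eq hbabs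
    have haabs : |a| ≤ 1 := by
      rw [abs_le]; constructor <;> [linarith; linarith]
    rw [hminb, Gval_small hbabs, Gval_small haabs]
    rcases le_or_gt 0 a with ha0 | ha0
    · have := caseIIa hb h1.le ha0 hab
      linarith
    · have hu0 : (0:ℝ) < -a := by linarith
      have hub : -a ≤ b := by linarith
      have h := caseIIb hb h1.le hu0 hub
      rw [← Real.log_neg_eq_log a]
      nlinarith [h]

lemma Godd (x : ℝ) : G10 (-x) = -G10 x := by
  have h : max (-1) (min (-x) 1) = -max (-1) (min x 1) := by
    rcases le_total x (-1) with h | h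
    · rw [min_eq_left (by linarith : x ≤ 1), max_eq_left h,
        min_eq_right (by linarith : (1:ℝ) ≤ -x)]
      norm_num
    · rcases le_total x 1 with h2 | h2
      · rw [min_eq_left h2, max_eq_right h, min_eq_left (by linarith : -x ≤ 1),
          max_eq_right (by linarith : (-1:ℝ) ≤ -x)]
      · rw [min_eq_right h2, max_eq_right (by norm_num : (-1:ℝ) ≤ 1),
          min_eq_left (by linarith : -x ≤ 1), max_eq_left (by linarith : -x ≤ -1)]
  simp only [G10, Real.log_neg_eq_log, h]
  ring

theorem stmt10 (a b : ℝ) (hab : a < b) :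
    (1 / (b - a)) * ∫ x in a..b, min (Real.log |x|) 0 ≥
      2 * (sSup ((fun x => min (Real.log |x|) 0) '' (Set.Icc a b \ {0})) - 1) := by
  have hL : 0 < b - a := sub_pos.mpr hab
  set M := max |a| |b| with hM
  have hSle : sSup ((fun x => min (Real.log |x|) 0) '' (Set.Icc a b \ {0})) ≤
      min (Real.log M) 0 := by
    apply csSup_le
    · rcases eq_or_ne b 0 with rfl | hb0
      · exact ⟨_, Set.mem_image_of_mem _ ⟨⟨le_rfl, hab.le⟩, fun h => absurd h (ne_of_lt hab)⟩⟩
      · exact ⟨_, Set.mem_image_of_mem _ ⟨⟨hab.le, le_rfl⟩, hb0⟩⟩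
    · rintro y ⟨x, ⟨hx1, hx2⟩, rfl⟩
      simp only [Set.mem_singleton_iff] at hx2
      have h1 : |x| ≤ M := abs_le_max_abs_abs hx1.1 hx1.2
      have h2 : 0 < |x| := abs_pos.mpr hx2
      have h3 : Real.log |x| ≤ Real.log M := Real.log_le_log h2 h1
      show min (Real.log |x|) 0 ≤ min (Real.log M) 0
      exact min_le_min h3 le_rfl
  have key : 2 * (b - a) * (min (Real.log M) 0 - 1) ≤ ∫ x in a..b, min (Real.log |x|) 0 := by
    have hfeq : ∀ x ∈ Set.uIcc a b, min (Real.log |x|) 0 = min (Real.log x) 0 := fun x _ => by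
      rw [Real.log_abs]
    rw [intervalIntegral.integral_congr hfeq, ftc10 a b]
    rcases le_total |a| |b| with hc | hc
    · have hb0 : 0 < b := by
        rcases le_or_gt b 0 with h | h
        · exfalso
          rw [abs_of_nonpos h, abs_of_nonpos (hab.le.trans h)] at hc
          linarith
        · exact h
      have hMb : M = b := by rw [hM, max_eq_right hc, abs_of_pos hb0]
      rw [hMb]
      have hba : -b ≤ a := by
        have := (abs_le.mp (hc.trans_eq (abs_of_pos hb0))).1
        linarith
      exact coreA hb0 hba hab
    · have ha0 : a < 0 := by
        rcases le_or_gt 0 a with h | h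
        · exfalso
          rw [abs_of_nonneg h, abs_of_nonneg (h.trans hab.le)] at hc
          linarith
        · exact h
      have hMa : M = -a := by rw [hM, max_eq_left hc, abs_of_neg ha0]
      rw [hMa]
      have hba' : -(-a) ≤ -b := by
        have := le_trans (le_abs_self b) (hc.trans_eq (abs_of_neg ha0))
        linarith
      have h := coreA (a := -b) (b := -a) (by linarith) hba' (by linarith)
      rw [Godd a, Godd b] at h
      linarith
  rw [ge_iff_le]
  have hstep : 2 * (sSup ((fun x => min (Real.log |x|) 0) '' (Set.Icc a b \ {0})) - 1) ≤
      2 * (min (Real.log M) 0 - 1) := by linarith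
  refine hstep.trans ?_
  rw [one_div, inv_mul_eq_div, le_div_iff₀ hL]
  nlinarith [key]
end

section
/- There exists C > 0 such that for all Λ > 2, all a, b ∈ ℂ, and a standard normal random variable N, E(log|a + bN| | N > Λ) ≥ max(log|a|, log|b|) − C log Λ. -/
open MeasureTheory Set

/-! ### Auxiliary lemmas -/

lemma aux_integrable_w : Integrable (fun x : ℝ => Real.exp (-x^2/2)) := by
  have h := integrable_exp_neg_mul_sq (by norm_num : (0:ℝ) < 1/2)
  have e : (fun x : ℝ => Real.exp (-x^2/2)) = fun x : ℝ => Real.exp (-(1/2) * x^2) := by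
    funext x; ring_nf
  rw [e]; exact h

lemma aux_integrable_xw : Integrable (fun x : ℝ => x * Real.exp (-x^2/2)) := by
  have h := integrable_mul_exp_neg_mul_sq (by norm_num : (0:ℝ) < 1/2)
  have e : (fun x : ℝ => x * Real.exp (-x^2/2)) = fun x : ℝ => x * Real.exp (-(1/2) * x^2) := by
    funext x; ring_nf
  rw [e]; exact h

lemma aux_tendsto_w : Filter.Tendsto (fun y : ℝ => Real.exp (-y^2/2)) Filter.atTop (nhds 0) := by
  have e : (fun y : ℝ => Real.exp (-y^2/2)) = fun y : ℝ => Real.exp (-(1/2) * y^2) := by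
    funext x; ring_nf
  rw [e]
  exact Real.tendsto_exp_atBot.comp
    ((Filter.tendsto_pow_atTop two_ne_zero).const_mul_atTop_of_neg (by norm_num))

lemma aux_hasDerivAt_nw (x : ℝ) :
    HasDerivAt (fun y : ℝ => -Real.exp (-y^2/2)) (x * Real.exp (-x^2/2)) x := by
  have h1 : HasDerivAt (fun y : ℝ => -y^2/2) (-x) x := by
    have := ((hasDerivAt_pow 2 x).neg.div_const 2)
    norm_num at this
    refine this.congr_deriv ?_
    ring
  have := h1.exp.neg
  refine this.congr_deriv ?_
  ring

lemma aux_integral_xw (Λ : ℝ) :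
    ∫ x in Ioi Λ, x * Real.exp (-x^2/2) = Real.exp (-Λ^2/2) := by
  have := integral_Ioi_of_hasDerivAt_of_tendsto' (a := Λ)
    (fun x _ => aux_hasDerivAt_nw x) aux_integrable_xw.integrableOn aux_tendsto_w.neg
  simp only [neg_zero] at this
  rw [this]; ring

lemma aux_intOn_inv_sq {Λ : ℝ} (hΛ : 2 < Λ) :
    IntegrableOn (fun x : ℝ => (1 + (x^2)⁻¹) * Real.exp (-x^2/2)) (Ioi Λ) := by
  apply Integrable.mono' (aux_integrable_w.const_mul 2).integrableOn
  · exact (((measurable_id.pow_const 2).inv.const_add 1).mul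
      (Real.measurable_exp.comp ((measurable_id.pow_const 2).neg.div_const 2))).aestronglyMeasurable
  · filter_upwards [ae_restrict_mem measurableSet_Ioi] with x hx
    have hx2 : (1:ℝ) < x^2 := by nlinarith [mem_Ioi.mp hx]
    rw [Real.norm_eq_abs, abs_of_pos (by positivity)]
    have : (x^2)⁻¹ ≤ 1 := by
      rw [inv_le_one_iff₀]; right; linarith
    nlinarith [Real.exp_pos (-x^2/2)]

lemma aux_integral_inv_sq {Λ : ℝ} (hΛ : 2 < Λ) :
    ∫ x in Ioi Λ, (1 + (x^2)⁻¹) * Real.exp (-x^2/2) = Real.exp (-Λ^2/2) / Λ := by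
  have hΛ0 : (0:ℝ) < Λ := by linarith
  have hderiv : ∀ x ∈ Ici Λ, HasDerivAt (fun y : ℝ => -Real.exp (-y^2/2) / y)
      ((1 + (x^2)⁻¹) * Real.exp (-x^2/2)) x := by
    intro x hx
    have hx0 : x ≠ 0 := by simp only [mem_Ici] at hx; intro h; rw [h] at hx; linarith
    have := (aux_hasDerivAt_nw x).div (hasDerivAt_id x) hx0
    refine this.congr_deriv ?_
    simp only [id]; field_simp
    ring
  have hint := aux_intOn_inv_sq hΛ
  have htend : Filter.Tendsto (fun y : ℝ => -Real.exp (-y^2/2) / y) Filter.atTop (nhds 0) := by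
    have := (aux_tendsto_w.neg.mul tendsto_inv_atTop_zero)
    rw [mul_zero] at this
    exact this.congr (fun y => (div_eq_mul_inv _ _).symm)
  have := integral_Ioi_of_hasDerivAt_of_tendsto' hderiv hint htend
  rw [this]
  ring

lemma rpow_neg_half_of_neg' {x : ℝ} (hx : x < 0) : x ^ (-(1/2) : ℝ) = 0 := by
  rw [Real.rpow_def_of_neg hx]
  have : (-(1/2) : ℝ) * Real.pi = -(Real.pi/2) := by ring
  rw [this, Real.cos_neg, Real.cos_pi_div_two, mul_zero]

lemma rpow_half_of_neg' {x : ℝ} (hx : x < 0) : x ^ ((1/2) : ℝ) = 0 := by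
  rw [Real.rpow_def_of_neg hx]
  rw [show ((1/2) : ℝ) * Real.pi = Real.pi/2 by ring, Real.cos_pi_div_two, mul_zero]

lemma rpow_neg_half_nonneg (x : ℝ) : 0 ≤ x ^ (-(1/2) : ℝ) := by
  rcases lt_or_ge x 0 with h | h
  · rw [rpow_neg_half_of_neg' h]
  · exact Real.rpow_nonneg h _

noncomputable def hfun (t : ℝ) : ℝ → ℝ :=
  fun x => 2 * ((x - t) ^ (-(1/2):ℝ) + (t - x) ^ (-(1/2):ℝ))

lemma hfun_nonneg (t x : ℝ) : 0 ≤ hfun t x := by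
  have h1 := rpow_neg_half_nonneg (x - t)
  have h2 := rpow_neg_half_nonneg (t - x)
  unfold hfun; linarith

lemma hfun_eq (t x : ℝ) : hfun t x = 2 * |x - t| ^ (-(1/2):ℝ) := by
  unfold hfun
  rcases lt_trichotomy x t with h | h | h
  · rw [abs_of_neg (by linarith : x - t < 0), rpow_neg_half_of_neg' (by linarith : x - t < 0)]
    ring_nf
  · simp [h, Real.zero_rpow (by norm_num : (-(1/2):ℝ) ≠ 0)]
  · rw [abs_of_pos (by linarith : 0 < x - t), rpow_neg_half_of_neg' (by linarith : t - x < 0)]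
    ring_nf

open intervalIntegral in
lemma integral_rpow' {r : ℝ} (h : -1 < r) (a b : ℝ) :
    ∫ x in a..b, x ^ r = (b ^ (r + 1) - a ^ (r + 1)) / (r + 1) := integral_rpow (Or.inl h)

lemma h1_ii (t δ : ℝ) :
    IntervalIntegrable (fun x : ℝ => (x - t) ^ (-(1/2):ℝ)) volume (t - δ) (t + δ) := by
  have h := (intervalIntegral.intervalIntegrable_rpow' (a := -δ) (b := δ)
    (by norm_num : (-1:ℝ) < -(1/2))).comp_sub_right t
  have e1 : -δ + t = t - δ := by ring
  have e2 : δ + t = t + δ := by ring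
  rwa [e1, e2] at h

lemma h2_ii (t δ : ℝ) :
    IntervalIntegrable (fun x : ℝ => (t - x) ^ (-(1/2):ℝ)) volume (t - δ) (t + δ) := by
  have h := (intervalIntegral.intervalIntegrable_rpow' (a := -δ) (b := δ)
    (by norm_num : (-1:ℝ) < -(1/2))).comp_sub_left t
  have e1 : t - -δ = t + δ := by ring
  exact (by rwa [e1] at h : IntervalIntegrable _ volume (t + δ) (t - δ)).symm

lemma hfun_ii (t δ : ℝ) : IntervalIntegrable (hfun t) volume (t - δ) (t + δ) :=
  ((h1_ii t δ).add (h2_ii t δ)).const_mul 2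

lemma rpow_base_integral {δ : ℝ} (hδ : 0 < δ) :
    ∫ x in (-δ)..δ, x ^ (-(1/2):ℝ) = 2 * δ ^ ((1/2):ℝ) := by
  rw [integral_rpow' (by norm_num : (-1:ℝ) < -(1/2))]
  rw [show (-(1/2) : ℝ) + 1 = 1/2 by norm_num, rpow_half_of_neg' (by linarith : -δ < 0)]
  ring

lemma hfun_integral {t δ : ℝ} (hδ : 0 < δ) :
    ∫ x in (t - δ)..(t + δ), hfun t x = 8 * δ ^ ((1/2):ℝ) := by
  unfold hfun
  rw [intervalIntegral.integral_const_mul]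
  rw [intervalIntegral.integral_add (h1_ii t δ) (h2_ii t δ)]
  have e1 : ∫ x in (t - δ)..(t + δ), (x - t) ^ (-(1/2):ℝ) = 2 * δ ^ ((1/2):ℝ) := by
    rw [intervalIntegral.integral_comp_sub_right (fun u => u ^ (-(1/2):ℝ)) t]
    rw [show t - δ - t = -δ by ring, show t + δ - t = δ by ring]
    exact rpow_base_integral hδ
  have e2 : ∫ x in (t - δ)..(t + δ), (t - x) ^ (-(1/2):ℝ) = 2 * δ ^ ((1/2):ℝ) := by
    rw [intervalIntegral.integral_comp_sub_left (fun u => u ^ (-(1/2):ℝ)) t]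
    rw [show t - (t + δ) = -δ by ring, show t - (t - δ) = δ by ring]
    exact rpow_base_integral hδ
  rw [e1, e2]; ring

lemma hfun_integrableOn {t δ : ℝ} (hδ : 0 < δ) :
    IntegrableOn (hfun t) (Ioo (t - δ) (t + δ)) := by
  have := (hfun_ii t δ)
  rwa [intervalIntegrable_iff_integrableOn_Ioo_of_le (by linarith)] at this

lemma hfun_setIntegral {t δ : ℝ} (hδ : 0 < δ) :
    ∫ x in Ioo (t - δ) (t + δ), hfun t x = 8 * δ ^ ((1/2):ℝ) := by
  rw [← integral_Ioc_eq_integral_Ioo,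
    ← intervalIntegral.integral_of_le (by linarith : t - δ ≤ t + δ)]
  exact hfun_integral hδ

lemma neg_log_le_rpow {y : ℝ} (hy : 0 < y) : -Real.log y ≤ 2 * y ^ (-(1/2) : ℝ) := by
  have h1 : Real.log (y ^ (-(1/2):ℝ)) = (-(1/2)) * Real.log y := Real.log_rpow hy _
  have h2 : Real.log (y ^ (-(1/2):ℝ)) ≤ y ^ (-(1/2):ℝ) :=
    Real.log_le_self (Real.rpow_nonneg hy.le _)
  linarith

lemma abs_log_le {y : ℝ} (hy : 0 < y) : |Real.log y| ≤ y + 2 * y ^ (-(1/2) : ℝ) := by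
  rw [abs_le]
  refine ⟨by have := neg_log_le_rpow hy; linarith, ?_⟩
  have := Real.log_le_self hy.le
  have h2 : 0 ≤ 2 * y ^ (-(1/2):ℝ) := by positivity
  linarith

lemma min0_eq (y : ℝ) : min 0 y = -max 0 (-y) := by
  rcases le_total y 0 with h | h
  · rw [min_eq_right h, max_eq_right (by linarith), neg_neg]
  · rw [min_eq_left h, max_eq_left (by linarith), neg_zero]

lemma key_pointwise {Λ x : ℝ} (hΛ : 2 < Λ) (hx : Λ < x) (z : ℂ) (hxt : x ≠ z.re) :
    Real.log (max 1 (‖z‖)) + min 0 (Real.log |x - z.re|) - Real.log 2 - Real.log x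
      ≤ Real.log (‖(x:ℂ) - z‖) := by
  set s := ‖z‖ with hs_def
  set r := ‖(x:ℂ) - z‖ with hr_def
  have hx0 : (0:ℝ) < x := by linarith
  have habs_re : |x - z.re| ≤ r := by
    have h := Complex.abs_re_le_norm ((x:ℂ) - z)
    simpa using h
  have hxt0 : 0 < |x - z.re| := abs_pos.mpr (sub_ne_zero.mpr hxt)
  have hr0 : 0 < r := lt_of_lt_of_le hxt0 habs_re
  rcases le_or_gt s (2*x) with hs | hs
  · have h1 : Real.log (max 1 s) ≤ Real.log 2 + Real.log x := by
      rw [← Real.log_mul two_ne_zero hx0.ne']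
      exact Real.log_le_log (by positivity) (max_le (by linarith) hs)
    have h2 : min 0 (Real.log |x - z.re|) ≤ Real.log r := by
      rcases le_or_gt 1 r with h | h
      · exact le_trans (min_le_left _ _) (Real.log_nonneg h)
      · exact le_trans (min_le_right _ _) (Real.log_le_log hxt0 habs_re)
    linarith
  · have hs1 : 1 < s := by linarith
    have hrs : s / 2 ≤ r := by
      have h1 : s ≤ r + x := by
        have h2 := norm_add_le ((z : ℂ) - (x:ℂ)) ((x:ℂ))
        simp only [sub_add_cancel] at h2
        have h3 : ‖z - (x:ℂ)‖ = r := by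
          rw [hr_def, norm_sub_rev]
        rw [h3] at h2
        have h4 : ‖(x:ℂ)‖ = x := by
          rw [Complex.norm_of_nonneg hx0.le]
        rw [h4] at h2
        exact h2
      linarith
    have h3 : Real.log s - Real.log 2 ≤ Real.log r := by
      rw [← Real.log_div (by positivity) two_ne_zero]
      exact Real.log_le_log (by positivity) hrs
    have h4 : min 0 (Real.log |x - z.re|) ≤ 0 := min_le_left _ _
    have h5 : 0 ≤ Real.log x := Real.log_nonneg (by linarith)
    rw [max_eq_right hs1.le]
    linarith

set_option maxHeartbeats 2000000 in
theorem stmt11 :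
    ∃ C : ℝ, 0 < C ∧ ∀ Λ : ℝ, 2 < Λ → ∀ a b : ℂ,
      (∫ x in Set.Ioi Λ, Real.log (‖a + b * (x : ℂ)‖) * Real.exp (-x ^ 2 / 2)) /
          (∫ x in Set.Ioi Λ, Real.exp (-x ^ 2 / 2)) ≥
        Real.log (max ‖a‖ ‖b‖) - C * Real.log Λ := by
  refine ⟨100, by norm_num, ?_⟩
  intro Λ hΛ a b
  have hΛ0 : (0:ℝ) < Λ := by linarith
  have hlogΛ : 0 < Real.log Λ := Real.log_pos (by linarith)
  have hlog2Λ : Real.log 2 ≤ Real.log Λ := Real.log_le_log (by norm_num) (by linarith)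
  have hlog2 : (0.6931471803:ℝ) < Real.log 2 := Real.log_two_gt_d9
  have hw_pos : ∀ x : ℝ, 0 < Real.exp (-x^2/2) := fun x => Real.exp_pos _
  have hw_le_one : ∀ x : ℝ, Real.exp (-x^2/2) ≤ 1 := by
    intro x
    have h := Real.exp_le_exp.mpr (show -x^2/2 ≤ 0 by nlinarith [sq_nonneg x])
    simpa using h
  have hw_meas : Measurable (fun x : ℝ => Real.exp (-x^2/2)) :=
    Real.measurable_exp.comp ((measurable_id.pow_const 2).neg.div_const 2)
  set D := ∫ x in Set.Ioi Λ, Real.exp (-x ^ 2 / 2) with hD_def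
  have hD_def' : D = ∫ x in Ioi Λ, Real.exp (-x^2/2) := hD_def
  have hEΛ : Real.exp (-Λ^2/2) ≤ 2*Λ*D := by
    have h1 := aux_integral_inv_sq hΛ
    have h2 : ∫ x in Ioi Λ, (1 + (x^2)⁻¹) * Real.exp (-x^2/2)
        ≤ ∫ x in Ioi Λ, 2 * Real.exp (-x^2/2) := by
      apply setIntegral_mono_on (aux_intOn_inv_sq hΛ)
        ((aux_integrable_w.const_mul 2).integrableOn) measurableSet_Ioi
      intro x hx
      have hx2 : (1:ℝ) < x^2 := by nlinarith [mem_Ioi.mp hx]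
      have h3 : (x^2)⁻¹ ≤ 1 := by rw [inv_le_one_iff₀]; right; linarith
      nlinarith [hw_pos x]
    rw [h1] at h2
    rw [integral_const_mul, ← hD_def'] at h2
    rw [div_le_iff₀ hΛ0] at h2
    linarith
  have hD_pos : 0 < D := by nlinarith [Real.exp_pos (-Λ^2/2)]
  rw [ge_iff_le, le_div_iff₀ hD_pos]
  rcases eq_or_ne b 0 with rfl | hb
  · simp only [zero_mul, add_zero, norm_zero]
    rw [max_eq_left (norm_nonneg a)]
    have he : ∫ x in Set.Ioi Λ, Real.log (‖a‖) * Real.exp (-x ^ 2 / 2)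
        = Real.log (‖a‖) * D := by
      rw [hD_def, integral_const_mul]
    rw [he]
    nlinarith [mul_pos hD_pos hlogΛ]
  · -- main case
    set z : ℂ := -a/b with hz_def
    set t : ℝ := z.re with ht_def
    have hb0 : (0:ℝ) < ‖b‖ := norm_pos_iff.mpr hb
    have haz : ∀ x : ℝ, a + b*(x:ℂ) = b * ((x:ℂ) - z) := by
      intro x
      rw [hz_def]
      field_simp
      ring
    have habz : ‖a‖ = ‖b‖ * ‖z‖ := by
      rw [hz_def, norm_div, norm_neg]
      field_simp
    have hmax0 : (0:ℝ) < max 1 (‖z‖) := lt_of_lt_of_le one_pos (le_max_left _ _)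
    have hM : Real.log (max (‖a‖) (‖b‖))
        = Real.log (‖b‖) + Real.log (max 1 (‖z‖)) := by
      rw [habz]
      have h1 : max (‖b‖ * ‖z‖) (‖b‖)
          = ‖b‖ * max 1 (‖z‖) := by
        rw [mul_max_of_nonneg _ _ hb0.le, mul_one, max_comm]
      rw [h1, Real.log_mul hb0.ne' hmax0.ne']
    -- window setup
    set δ : ℝ := Λ⁻¹^(2:ℕ) with hδ_def
    have hδ_pos : 0 < δ := by positivity
    have hδ_half : δ ^ ((1/2):ℝ) = Λ⁻¹ := by
      rw [hδ_def, ← Real.rpow_natCast Λ⁻¹ 2, ← Real.rpow_mul (by positivity)]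
      norm_num
    have hlogδ : Real.log δ = -(2 * Real.log Λ) := by
      rw [hδ_def, Real.log_pow, Real.log_inv]
      push_cast
      ring
    set ρ : ℝ → ℝ := (Ioo (t-δ) (t+δ)).indicator (hfun t) with hρ_def
    have hρ_int : Integrable ρ :=
      (integrable_indicator_iff measurableSet_Ioo).mpr (hfun_integrableOn hδ_pos)
    have hρ_nonneg : ∀ x, 0 ≤ ρ x := fun x => indicator_nonneg (fun y _ => hfun_nonneg t y) x
    have hρ_integral : ∫ x, ρ x = 8 * Λ⁻¹ := by
      rw [hρ_def, integral_indicator measurableSet_Ioo, hfun_setIntegral hδ_pos, hδ_half]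
    set φ : ℝ → ℝ := fun x => max 0 (-Real.log |x - t|) with hφ_def
    have hφ_nonneg : ∀ x, 0 ≤ φ x := fun x => le_max_left _ _
    have hφ_meas : Measurable φ :=
      measurable_const.max ((Real.measurable_log.comp (measurable_id.sub_const t).abs).neg)
    have hφw_le : ∀ x ∈ Ioi Λ,
        φ x * Real.exp (-x^2/2)
          ≤ 2*Real.log Λ * Real.exp (-x^2/2) + ρ x * Real.exp (-x^2/2) := by
      intro x _
      by_cases hmem : x ∈ Ioo (t-δ) (t+δ)
      · have hρx : ρ x = hfun t x := indicator_of_mem hmem _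
        have hφρ : φ x ≤ ρ x := by
          rw [hρx, hfun_eq]
          rcases eq_or_ne x t with rfl | hxt
          · have he : φ t = 0 := by simp [hφ_def]
            rw [he]
            positivity
          · have h0 : 0 < |x - t| := abs_pos.mpr (sub_ne_zero.mpr hxt)
            exact max_le (by positivity) (neg_log_le_rpow h0)
        have h1 : 0 ≤ 2*Real.log Λ * Real.exp (-x^2/2) := by positivity
        nlinarith [mul_le_mul_of_nonneg_right hφρ (hw_pos x).le]
      · have hρx : ρ x = 0 := indicator_of_notMem hmem _
        have hd : δ ≤ |x - t| := by
          simp only [mem_Ioo, not_and_or, not_lt] at hmem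
          rcases hmem with h | h
          · rw [abs_of_nonpos (by linarith)]
            linarith
          · rw [abs_of_nonneg (by linarith)]
            linarith
        have hlog : -Real.log |x - t| ≤ 2*Real.log Λ := by
          have h := Real.log_le_log hδ_pos hd
          rw [hlogδ] at h
          linarith
        have hφx : φ x ≤ 2*Real.log Λ := max_le (by positivity) hlog
        rw [hρx, zero_mul, add_zero]
        exact mul_le_mul_of_nonneg_right hφx (hw_pos x).le
    have hφw_int : IntegrableOn (fun x => φ x * Real.exp (-x^2/2)) (Ioi Λ) := by
      apply Integrable.mono'
        (((aux_integrable_w.const_mul (2*Real.log Λ)).add hρ_int).integrableOn)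
      · exact (hφ_meas.mul hw_meas).aestronglyMeasurable
      · filter_upwards [ae_restrict_mem measurableSet_Ioi] with x hx
        rw [Real.norm_eq_abs, abs_of_nonneg (mul_nonneg (hφ_nonneg x) (hw_pos x).le)]
        have h1 := hφw_le x hx
        have h2 : ρ x * Real.exp (-x^2/2) ≤ ρ x :=
          mul_le_of_le_one_right (hρ_nonneg x) (hw_le_one x)
        simp only [Pi.add_apply]
        linarith
    have hρw_int : IntegrableOn (fun x => ρ x * Real.exp (-x^2/2)) (Ioi Λ) := by
      apply Integrable.mono' hρ_int.integrableOn
      · exact (hρ_int.aestronglyMeasurable.restrict.mul hw_meas.aestronglyMeasurable.restrict)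
      · filter_upwards with x
        rw [Real.norm_eq_abs, abs_of_nonneg (mul_nonneg (hρ_nonneg x) (hw_pos x).le)]
        exact mul_le_of_le_one_right (hρ_nonneg x) (hw_le_one x)
    have hρw_bound : ∫ x in Ioi Λ, ρ x * Real.exp (-x^2/2) ≤ 16 * D := by
      have h1 : ∫ x in Ioi Λ, ρ x * Real.exp (-x^2/2)
          ≤ ∫ x in Ioi Λ, ρ x * Real.exp (-Λ^2/2) := by
        apply setIntegral_mono_on hρw_int (hρ_int.mul_const _).integrableOn measurableSet_Ioi
        intro x hx
        apply mul_le_mul_of_nonneg_left ?_ (hρ_nonneg x)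
        apply Real.exp_le_exp.mpr
        have hxl : Λ ≤ x := (mem_Ioi.mp hx).le
        nlinarith
      have h2 : ∫ x in Ioi Λ, ρ x * Real.exp (-Λ^2/2) ≤ ∫ x, ρ x * Real.exp (-Λ^2/2) := by
        apply setIntegral_le_integral (hρ_int.mul_const _)
        filter_upwards with x
        exact mul_nonneg (hρ_nonneg x) (Real.exp_pos _).le
      have h3 : ∫ x, ρ x * Real.exp (-Λ^2/2) = 8 * Λ⁻¹ * Real.exp (-Λ^2/2) := by
        rw [integral_mul_const, hρ_integral]
      have h6 : 0 < Λ⁻¹ := inv_pos.mpr hΛ0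
      have h5 : Λ⁻¹ * Λ = 1 := inv_mul_cancel₀ hΛ0.ne'
      have h4 : 8 * Λ⁻¹ * Real.exp (-Λ^2/2) ≤ 16 * D := by
        have h7 := mul_le_mul_of_nonneg_left hEΛ (by positivity : (0:ℝ) ≤ 8 * Λ⁻¹)
        calc 8 * Λ⁻¹ * Real.exp (-Λ^2/2) ≤ 8 * Λ⁻¹ * (2*Λ*D) := h7
          _ = 16 * (Λ⁻¹ * Λ) * D := by ring
          _ = 16 * D := by rw [h5]; ring
      linarith
    have hφw_bound : ∫ x in Ioi Λ, φ x * Real.exp (-x^2/2)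
        ≤ 2*Real.log Λ * D + 16 * D := by
      have h1 : ∫ x in Ioi Λ, φ x * Real.exp (-x^2/2)
          ≤ ∫ x in Ioi Λ, (2*Real.log Λ * Real.exp (-x^2/2) + ρ x * Real.exp (-x^2/2)) := by
        apply setIntegral_mono_on hφw_int ?_ measurableSet_Ioi hφw_le
        exact ((aux_integrable_w.const_mul _).integrableOn.add hρw_int)
      have h2 : ∫ x in Ioi Λ, (2*Real.log Λ * Real.exp (-x^2/2) + ρ x * Real.exp (-x^2/2))
          = 2*Real.log Λ * D + ∫ x in Ioi Λ, ρ x * Real.exp (-x^2/2) := by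
        rw [integral_add ((aux_integrable_w.const_mul _).integrableOn) hρw_int,
          integral_const_mul, ← hD_def']
      linarith
    -- the log x term
    have hlogx_int : IntegrableOn (fun x => Real.log x * Real.exp (-x^2/2)) (Ioi Λ) := by
      apply Integrable.mono' aux_integrable_xw.integrableOn
      · exact (Real.measurable_log.mul hw_meas).aestronglyMeasurable
      · filter_upwards [ae_restrict_mem measurableSet_Ioi] with x hx
        have hx1 : (1:ℝ) < x := by have := mem_Ioi.mp hx; linarith
        rw [Real.norm_eq_abs, abs_of_nonneg (mul_nonneg (Real.log_nonneg hx1.le) (hw_pos x).le)]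
        exact mul_le_mul_of_nonneg_right (Real.log_le_self (by linarith)) (hw_pos x).le
    have hlogx_bound : ∫ x in Ioi Λ, Real.log x * Real.exp (-x^2/2)
        ≤ Real.log Λ * D + 2 * D := by
      have h1 : ∫ x in Ioi Λ, Real.log x * Real.exp (-x^2/2)
          ≤ ∫ x in Ioi Λ, ((Real.log Λ - 1) * Real.exp (-x^2/2) + Λ⁻¹ * (x * Real.exp (-x^2/2))) := by
        apply setIntegral_mono_on hlogx_int
          (((aux_integrable_w.const_mul _).add (aux_integrable_xw.const_mul _)).integrableOn)
          measurableSet_Ioi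
        intro x hx
        simp only [Pi.add_apply]
        have hx0 : (0:ℝ) < x := by have := mem_Ioi.mp hx; linarith
        have hlx : Real.log x ≤ Real.log Λ - 1 + Λ⁻¹ * x := by
          have hd : Real.log (x/Λ) = Real.log x - Real.log Λ := Real.log_div hx0.ne' hΛ0.ne'
          have h2 := Real.log_le_sub_one_of_pos (show (0:ℝ) < x/Λ by positivity)
          rw [hd] at h2
          have h3 : x / Λ = Λ⁻¹ * x := by ring
          rw [h3] at h2
          linarith
        have h4 := mul_le_mul_of_nonneg_right hlx (hw_pos x).le
        nlinarith [h4]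
      have h2 : ∫ x in Ioi Λ, ((Real.log Λ - 1) * Real.exp (-x^2/2) + Λ⁻¹ * (x * Real.exp (-x^2/2)))
          = (Real.log Λ - 1) * D + Λ⁻¹ * Real.exp (-Λ^2/2) := by
        rw [integral_add ((aux_integrable_w.const_mul _).integrableOn)
            ((aux_integrable_xw.const_mul _).integrableOn),
          integral_const_mul, integral_const_mul, aux_integral_xw, ← hD_def']
      have h6 : 0 < Λ⁻¹ := inv_pos.mpr hΛ0
      have h5 : Λ⁻¹ * Λ = 1 := inv_mul_cancel₀ hΛ0.ne'
      have h3 : Λ⁻¹ * Real.exp (-Λ^2/2) ≤ 2 * D := by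
        have h7 := mul_le_mul_of_nonneg_left hEΛ h6.le
        calc Λ⁻¹ * Real.exp (-Λ^2/2) ≤ Λ⁻¹ * (2*Λ*D) := h7
          _ = 2 * (Λ⁻¹ * Λ) * D := by ring
          _ = 2 * D := by rw [h5]; ring
      linarith
    -- the min-term
    have hm0w_eq : (fun x : ℝ => min 0 (Real.log |x - t|) * Real.exp (-x^2/2))
        = fun x => -(φ x * Real.exp (-x^2/2)) := by
      funext x
      rw [min0_eq, hφ_def]
      ring
    have hm0_int : IntegrableOn (fun x : ℝ => min 0 (Real.log |x - t|) * Real.exp (-x^2/2)) (Ioi Λ) := by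
      rw [hm0w_eq]
      exact hφw_int.neg
    have hm0_val : ∫ x in Ioi Λ, min 0 (Real.log |x - t|) * Real.exp (-x^2/2)
        = -∫ x in Ioi Λ, φ x * Real.exp (-x^2/2) := by
      rw [hm0w_eq, integral_neg]
    -- a.e. avoidance of the point t
    have hne : ∀ᵐ x ∂(volume.restrict (Ioi Λ)), x ≠ t := by
      refine (ae_iff).mpr ?_
      have e : {x : ℝ | ¬ x ≠ t} = {t} := by ext u; simp
      rw [e, Measure.restrict_apply (measurableSet_singleton t)]
      exact measure_mono_null inter_subset_left (measure_singleton t)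
    -- integrability of the target integrand
    have hf_int : IntegrableOn
        (fun x : ℝ => Real.log (‖a + b*(x:ℂ)‖) * Real.exp (-x^2/2)) (Ioi Λ) := by
      set ρ₁ : ℝ → ℝ := (Ioo (t-1) (t+1)).indicator (hfun t) with hρ₁_def
      have hρ₁_int : Integrable ρ₁ :=
        (integrable_indicator_iff measurableSet_Ioo).mpr (hfun_integrableOn one_pos)
      apply Integrable.mono'
        (((aux_integrable_w.const_mul (|Real.log (‖b‖)| + ‖z‖ + 2)).add
          aux_integrable_xw).add hρ₁_int).integrableOn
      · apply Measurable.aestronglyMeasurable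
        apply Measurable.mul ?_ hw_meas
        apply Real.measurable_log.comp
        exact continuous_norm.measurable.comp
          (measurable_const.add (measurable_const.mul Complex.measurable_ofReal))
      · filter_upwards [ae_restrict_mem measurableSet_Ioi, hne] with x hx hxt
        have hx0 : (0:ℝ) < x := by have := mem_Ioi.mp hx; linarith
        have hxt0 : 0 < |x - t| := abs_pos.mpr (sub_ne_zero.mpr hxt)
        have hzx : |x - t| ≤ ‖(x:ℂ) - z‖ := by
          have h := Complex.abs_re_le_norm ((x:ℂ) - z)
          have e : ((x:ℂ) - z).re = x - t := by simp [ht_def]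
          rwa [e] at h
        have hzx0 : 0 < ‖(x:ℂ) - z‖ := lt_of_lt_of_le hxt0 hzx
        rw [Real.norm_eq_abs, haz x, norm_mul, Real.log_mul hb0.ne' hzx0.ne', abs_mul,
          abs_of_nonneg (hw_pos x).le]
        have h1 : |Real.log (‖b‖) + Real.log (‖(x:ℂ)-z‖)|
            ≤ |Real.log (‖b‖)| + |Real.log (‖(x:ℂ)-z‖)| := abs_add_le _ _
        have h2 := abs_log_le hzx0
        have h3 : ‖(x:ℂ) - z‖ ≤ x + ‖z‖ := by
          have h4 := norm_sub_le (x:ℂ) z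
          have h5 : ‖(x:ℂ)‖ = x := by
            rw [Complex.norm_of_nonneg hx0.le]
          rw [h5] at h4
          exact h4
        have h4 : (‖(x:ℂ)-z‖) ^ (-(1/2):ℝ) ≤ |x - t| ^ (-(1/2):ℝ) :=
          Real.rpow_le_rpow_of_nonpos hxt0 hzx (by norm_num)
        have hwp := (hw_pos x).le
        have hw1 := hw_le_one x
        simp only [Pi.add_apply]
        by_cases hmem : x ∈ Ioo (t-1) (t+1)
        · have hρ₁x : ρ₁ x = hfun t x := indicator_of_mem hmem _
          have h5 : 2 * |x - t| ^ (-(1/2):ℝ) = hfun t x := (hfun_eq t x).symm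
          have hA : |Real.log (‖b‖) + Real.log (‖(x:ℂ)-z‖)|
              ≤ |Real.log (‖b‖)| + (x + ‖z‖) + hfun t x := by
            have h6 : 2 * (‖(x:ℂ)-z‖) ^ (-(1/2):ℝ) ≤ hfun t x := by
              rw [← h5]; linarith
            linarith
          have h7 : hfun t x * Real.exp (-x^2/2) ≤ ρ₁ x := by
            rw [hρ₁x]
            exact mul_le_of_le_one_right (hfun_nonneg t x) hw1
          have h8 := mul_le_mul_of_nonneg_right hA hwp
          nlinarith [hfun_nonneg t x]
        · have hρ₁x : ρ₁ x = 0 := indicator_of_notMem hmem _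
          have hd1 : 1 ≤ |x - t| := by
            simp only [mem_Ioo, not_and_or, not_lt] at hmem
            rcases hmem with h | h
            · rw [abs_of_nonpos (by linarith)]; linarith
            · rw [abs_of_nonneg (by linarith)]; linarith
          have h6 : |x-t| ^ (-(1/2):ℝ) ≤ 1 :=
            Real.rpow_le_one_of_one_le_of_nonpos hd1 (by norm_num)
          have hA : |Real.log (‖b‖) + Real.log (‖(x:ℂ)-z‖)|
              ≤ |Real.log (‖b‖)| + (x + ‖z‖) + 2 := by
            linarith
          have h8 := mul_le_mul_of_nonneg_right hA hwp
          rw [hρ₁x]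
          nlinarith [hfun_nonneg t x]
    -- the a.e. pointwise lower bound
    have hae : ∀ᵐ x ∂(volume.restrict (Ioi Λ)),
        (Real.log (‖b‖) + Real.log (max 1 (‖z‖))
          - Real.log 2 - Real.log x + min 0 (Real.log |x - t|)) * Real.exp (-x^2/2)
        ≤ Real.log (‖a + b*(x:ℂ)‖) * Real.exp (-x^2/2) := by
      filter_upwards [ae_restrict_mem measurableSet_Ioi, hne] with x hx hxt
      have hxI : Λ < x := mem_Ioi.mp hx
      have hxt0 : 0 < |x - t| := abs_pos.mpr (sub_ne_zero.mpr hxt)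
      have hzx : |x - t| ≤ ‖(x:ℂ) - z‖ := by
        have h := Complex.abs_re_le_norm ((x:ℂ) - z)
        have e : ((x:ℂ) - z).re = x - t := by simp [ht_def]
        rwa [e] at h
      have hzx0 : 0 < ‖(x:ℂ) - z‖ := lt_of_lt_of_le hxt0 hzx
      have hlog : Real.log (‖a + b*(x:ℂ)‖)
          = Real.log (‖b‖) + Real.log (‖(x:ℂ) - z‖) := by
        rw [haz x, norm_mul, Real.log_mul hb0.ne' hzx0.ne']
      have hkey := key_pointwise hΛ hxI z (by rwa [← ht_def])
      rw [← ht_def] at hkey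
      apply mul_le_mul_of_nonneg_right ?_ (hw_pos x).le
      rw [hlog]
      linarith
    -- integrability of the lower-bound integrand
    have hg_eq : (fun x : ℝ => (Real.log (‖b‖) + Real.log (max 1 (‖z‖))
          - Real.log 2 - Real.log x + min 0 (Real.log |x - t|)) * Real.exp (-x^2/2))
        = fun x : ℝ => (Real.log (‖b‖) + Real.log (max 1 (‖z‖))
            - Real.log 2) * Real.exp (-x^2/2)
          + (-(Real.log x * Real.exp (-x^2/2)))
          + min 0 (Real.log |x - t|) * Real.exp (-x^2/2) := by
      funext x
      ring
    have hc_int : IntegrableOn (fun x : ℝ => (Real.log (‖b‖)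
          + Real.log (max 1 (‖z‖)) - Real.log 2) * Real.exp (-x^2/2)) (Ioi Λ) :=
      (aux_integrable_w.const_mul _).integrableOn
    have hneg_int : IntegrableOn (fun x : ℝ => -(Real.log x * Real.exp (-x^2/2))) (Ioi Λ) :=
      hlogx_int.neg
    have hsum1_int : IntegrableOn (fun x : ℝ => (Real.log (‖b‖)
          + Real.log (max 1 (‖z‖)) - Real.log 2) * Real.exp (-x^2/2)
          + -(Real.log x * Real.exp (-x^2/2))) (Ioi Λ) :=
      hc_int.add hneg_int
    have hg_int : IntegrableOn (fun x : ℝ => (Real.log (‖b‖)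
          + Real.log (max 1 (‖z‖))
          - Real.log 2 - Real.log x + min 0 (Real.log |x - t|)) * Real.exp (-x^2/2)) (Ioi Λ) := by
      rw [hg_eq]
      exact hsum1_int.add hm0_int
    have hmain : ∫ x in Ioi Λ, (Real.log (‖b‖) + Real.log (max 1 (‖z‖))
          - Real.log 2 - Real.log x + min 0 (Real.log |x - t|)) * Real.exp (-x^2/2)
        ≤ ∫ x in Ioi Λ, Real.log (‖a + b*(x:ℂ)‖) * Real.exp (-x^2/2) :=
      integral_mono_ae hg_int hf_int hae
    have hg_val : ∫ x in Ioi Λ, (Real.log (‖b‖) + Real.log (max 1 (‖z‖))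
          - Real.log 2 - Real.log x + min 0 (Real.log |x - t|)) * Real.exp (-x^2/2)
        = (Real.log (‖b‖) + Real.log (max 1 (‖z‖)) - Real.log 2) * D
          + (-(∫ x in Ioi Λ, Real.log x * Real.exp (-x^2/2)))
          + ∫ x in Ioi Λ, min 0 (Real.log |x - t|) * Real.exp (-x^2/2) := by
      rw [hg_eq]
      rw [integral_add hsum1_int hm0_int, integral_add hc_int hneg_int,
        integral_const_mul, integral_neg, ← hD_def']
    -- finish
    rw [hM]
    have hb1 : Real.log 2 * D ≤ Real.log Λ * D := mul_le_mul_of_nonneg_right hlog2Λ hD_pos.le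
    have hb2 : (18:ℝ) * D ≤ 36 * Real.log Λ * D := by nlinarith
    have hLHSeq : ∫ x in Set.Ioi Λ, Real.log (‖a + b * (x:ℂ)‖) * Real.exp (-x ^ 2 / 2)
        = ∫ x in Ioi Λ, Real.log (‖a + b*(x:ℂ)‖) * Real.exp (-x^2/2) := rfl
    rw [hLHSeq]
    linarith [hmain, hg_val, hm0_val, hφw_bound, hlogx_bound]
end

section
/- Let σ be an ergodic measure-preserving transformation of a probability space (Σ, P) and let (f_n) be a sub-additive sequence of integrable functions (f_{n+m}(ω) ≤ f_n(σ^m ω) + f_m(ω) for all ω and n,m > 0) with inf_n (1/n) ∫ f_n dP > −∞. Then for every ε > 0 there exist χ > 0 and n_0 ∈ ℕ such that for all M ≥ n_0 and all measurable sets A with P(A) < χ, one has ∫_A f_M dP > −ε M. -/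
open MeasureTheory

set_option maxHeartbeats 1000000

lemma block_sub {Ω : Type*} (σ : Ω → Ω) (f : ℕ → Ω → ℝ)
    (hsub : ∀ (n m : ℕ), 0 < n → 0 < m → ∀ ω, f (n + m) ω ≤ f n (σ^[m] ω) + f m ω)
    (N r : ℕ) (hN : 0 < N) (hr : 0 < r) :
    ∀ q ω, f (N * q + r) ω ≤ (∑ j ∈ Finset.range q, f N (σ^[r + j * N] ω)) + f r ω := by
  intro q
  induction q with
  | zero => simp
  | succ q ih =>
    intro ω
    have h1 : f (N * (q + 1) + r) ω ≤ f N (σ^[N * q + r] ω) + f (N * q + r) ω := by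
      have := hsub N (N * q + r) hN (by positivity) ω
      have he : N + (N * q + r) = N * (q + 1) + r := by ring
      rwa [he] at this
    have h2 := ih ω
    rw [Finset.sum_range_succ]
    have he2 : r + q * N = N * q + r := by ring
    rw [he2]
    linarith


lemma tail_tendsto {Ω : Type*} [MeasurableSpace Ω] (P : Measure Ω) (h : Ω → ℝ)
    (hh : Integrable h P) (hpos : 0 ≤ h) :
    Filter.Tendsto (fun K : ℕ => ∫ ω, max (h ω - K) 0 ∂P) Filter.atTop (nhds 0) := by
  have main : Filter.Tendsto (fun K : ℕ => ∫ ω, max (h ω - K) 0 ∂P) Filter.atTop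
      (nhds (∫ ω, (0:ℝ) ∂P)) := by
    apply tendsto_integral_of_dominated_convergence h
    · intro K
      exact ((hh.aestronglyMeasurable.sub aestronglyMeasurable_const).sup
        aestronglyMeasurable_const)
    · exact hh
    · intro K
      filter_upwards with ω
      rw [Real.norm_eq_abs, abs_of_nonneg (le_max_right _ _)]
      have h1 := hpos ω
      have h2 : (0:ℝ) ≤ (K : ℝ) := Nat.cast_nonneg K
      simp only [Pi.zero_apply] at h1
      rw [max_le_iff]
      constructor <;> linarith
    · filter_upwards with ω
      apply Filter.Tendsto.congr' (f₁ := fun _ => (0:ℝ))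
      · filter_upwards [Filter.eventually_ge_atTop (Nat.ceil (h ω))] with K hK
        have : h ω ≤ (K : ℝ) := le_trans (Nat.le_ceil _) (by exact_mod_cast hK)
        rw [max_eq_right]; linarith
      · exact tendsto_const_nhds
  simpa using main

lemma compl_est {Ω : Type*} [MeasurableSpace Ω] (P : Measure Ω) [IsProbabilityMeasure P]
    (g : Ω → ℝ) (hg : Integrable g P) (T : Ω → Ω) (hT : MeasurePreserving T P P)
    (A : Set Ω) (hA : MeasurableSet A) (K : ℝ) :
    ∫ ω in Aᶜ, g (T ω) ∂P ≤
      (∫ ω, g ω ∂P) + K * (P A).toReal + ∫ ω, max (|g ω| - K) 0 ∂P := by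
  set τ : Ω → ℝ := fun ω => max (|g ω| - K) 0 with hτdef
  have hτ : Integrable τ P := (hg.abs.sub (integrable_const K)).pos_part
  have hgT : Integrable (fun ω => g (T ω)) P := (hT.integrable_comp hg.aestronglyMeasurable).mpr hg
  have hτT : Integrable (fun ω => τ (T ω)) P := (hT.integrable_comp hτ.aestronglyMeasurable).mpr hτ
  have hsplit : (∫ ω in A, g (T ω) ∂P) + ∫ ω in Aᶜ, g (T ω) ∂P = ∫ ω, g (T ω) ∂P :=
    integral_add_compl hA hgT
  have h1 : AEStronglyMeasurable g (Measure.map T P) := by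
    rw [hT.map_eq]; exact hg.aestronglyMeasurable
  have hcomp : ∫ ω, g ω ∂(Measure.map T P) = ∫ ω, g (T ω) ∂P :=
    integral_map hT.aemeasurable h1
  rw [hT.map_eq] at hcomp
  have h1τ : AEStronglyMeasurable τ (Measure.map T P) := by
    rw [hT.map_eq]; exact hτ.aestronglyMeasurable
  have hcompτ : ∫ ω, τ ω ∂(Measure.map T P) = ∫ ω, τ (T ω) ∂P :=
    integral_map hT.aemeasurable h1τ
  rw [hT.map_eq] at hcompτ
  have key : -(∫ ω in A, g (T ω) ∂P) ≤ K * (P A).toReal + ∫ ω, τ ω ∂P := by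
    have e1 : -(∫ ω in A, g (T ω) ∂P) = ∫ ω in A, -(g (T ω)) ∂P := (integral_neg _).symm
    have e2 : ∫ ω in A, -(g (T ω)) ∂P ≤ ∫ ω in A, (K + τ (T ω)) ∂P := by
      apply setIntegral_mono hgT.neg.integrableOn
        (((integrable_const K).add hτT).integrableOn)
      intro ω
      have h3 : |g (T ω)| - K ≤ τ (T ω) := le_max_left _ _
      have h4 : -(g (T ω)) ≤ |g (T ω)| := neg_le_abs _
      simp only [Pi.add_apply, Pi.neg_apply, Function.comp_apply]
      linarith
    have e3 : ∫ ω in A, (K + τ (T ω)) ∂P = K * (P A).toReal + ∫ ω in A, τ (T ω) ∂P := by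
      rw [integral_add (integrableOn_const (C := K) (measure_ne_top _ _)) hτT.integrableOn,
        setIntegral_const, smul_eq_mul, mul_comm, measureReal_def]
    have e4 : ∫ ω in A, τ (T ω) ∂P ≤ ∫ ω, τ (T ω) ∂P := by
      apply setIntegral_le_integral hτT
      filter_upwards with ω
      exact le_max_right _ _
    rw [← hcompτ] at e4
    linarith [e1, e2, e3]
  linarith [hsplit, hcomp, key]

theorem stmt18 {Ω : Type*} [MeasurableSpace Ω] (P : Measure Ω) [IsProbabilityMeasure P]
    (σ : Ω → Ω) (hσ : Ergodic σ P)
    (f : ℕ → Ω → ℝ) (hint : ∀ n, Integrable (f n) P)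
    (hsub : ∀ (n m : ℕ), 0 < n → 0 < m → ∀ ω, f (n + m) ω ≤ f n (σ^[m] ω) + f m ω)
    (hbdd : ∃ L : ℝ, ∀ n : ℕ, 0 < n → L ≤ (1 / (n : ℝ)) * ∫ ω, f n ω ∂P) :
    ∀ ε > (0 : ℝ), ∃ χ > (0 : ℝ), ∃ n₀ : ℕ, ∀ M : ℕ, n₀ ≤ M →
      ∀ A : Set Ω, MeasurableSet A → P A < ENNReal.ofReal χ →
        (∫ ω in A, f M ω ∂P) > -(ε * M) := by
  intro ε hε
  obtain ⟨L, hL⟩ := hbdd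
  set a : ℕ → ℝ := fun n => ∫ ω, f n ω ∂P with hadef
  have hbdd' : BddBelow (Set.range fun n : ℕ => a (n + 1) / ((n : ℝ) + 1)) := by
    refine ⟨L, ?_⟩
    rintro x ⟨n, rfl⟩
    have h := hL (n + 1) (Nat.succ_pos n)
    push_cast at h
    rwa [one_div, inv_mul_eq_div] at h
  set α := ⨅ n : ℕ, a (n + 1) / ((n : ℝ) + 1) with hαdef
  have hMα : ∀ M : ℕ, 0 < M → (M : ℝ) * α ≤ a M := by
    intro M hM
    obtain ⟨n, rfl⟩ : ∃ n, M = n + 1 := ⟨M - 1, by omega⟩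
    have h := ciInf_le hbdd' n
    rw [le_div_iff₀ (by positivity : (0:ℝ) < (n:ℝ) + 1)] at h
    push_cast
    linarith
  -- choose N
  obtain ⟨n1, hn1⟩ := exists_lt_of_ciInf_lt (show α < α + ε / 4 by linarith)
  set N := n1 + 1 with hNdef
  have hN1 : 0 < N := Nat.succ_pos _
  have hNpos : (0:ℝ) < (N:ℝ) := by exact_mod_cast hN1
  have hNa : a N < (N : ℝ) * (α + ε / 4) := by
    have h : a N / (N : ℝ) < α + ε / 4 := by
      have : ((n1:ℝ) + 1) = (N:ℝ) := by push_cast [hNdef]; ring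
      rwa [this] at hn1
    rw [div_lt_iff₀ hNpos] at h
    linarith
  -- choose K
  obtain ⟨K, hK⟩ := ((tail_tendsto P (fun ω => |f N ω|) (hint N).abs
    (fun ω => abs_nonneg _)).eventually_lt_const
    (show (0:ℝ) < ε * N / 8 by positivity)).exists
  set tl := ∫ ω, max (|f N ω| - (K : ℝ)) 0 ∂P with htldef
  set χ := ε * N / (8 * ((K : ℝ) + 1)) with hχdef
  have hχpos : 0 < χ := by positivity
  -- boundary bound
  have hne : (Finset.Icc N (2 * N)).Nonempty := Finset.nonempty_Icc.mpr (by omega)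
  set B := (Finset.Icc N (2 * N)).sup' hne (fun r => ∫ ω, |f r ω| ∂P) with hBdef
  set D := B + 2 * (N : ℝ) * (|α| + ε) with hDdef
  refine ⟨χ, hχpos, max N (Nat.ceil (2 * D / ε) + 1), ?_⟩
  intro M hM A hAmeas hPA
  have hMN : N ≤ M := le_trans (le_max_left _ _) hM
  obtain ⟨q, r, hrN, hr2, hqr⟩ : ∃ q r : ℕ, N ≤ r ∧ r ≤ 2 * N ∧ M = N * q + r := by
    refine ⟨(M - N) / N, N + (M - N) % N, Nat.le_add_right _ _, ?_, ?_⟩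
    · have := Nat.mod_lt (M - N) hN1
      omega
    · have := Nat.div_add_mod (M - N) N
      omega
  have hr1 : 0 < r := by omega
  have hPAr : (P A).toReal < χ := ENNReal.toReal_lt_of_lt_ofReal hPA
  have hPA0 : 0 ≤ (P A).toReal := ENNReal.toReal_nonneg
  -- integrability
  have hcompInt : ∀ t : ℕ, Integrable (fun ω => f N (σ^[t] ω)) P := fun t =>
    ((hσ.toMeasurePreserving.iterate t).integrable_comp
      (hint N).aestronglyMeasurable).mpr (hint N)
  have hsumInt : Integrable
      (fun ω => (∑ j ∈ Finset.range q, f N (σ^[r + j * N] ω)) + f r ω) P :=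
    (integrable_finset_sum _ (fun j _ => hcompInt _)).add (hint r)
  -- step 1
  have s1 : ∫ ω in Aᶜ, f M ω ∂P ≤
      ∫ ω in Aᶜ, ((∑ j ∈ Finset.range q, f N (σ^[r + j * N] ω)) + f r ω) ∂P := by
    apply setIntegral_mono (hint M).integrableOn hsumInt.integrableOn
    intro ω
    have h := block_sub σ f hsub N r hN1 hr1 q ω
    calc f M ω = f (N * q + r) ω := by rw [← hqr]
    _ ≤ _ := h
  -- step 2
  have s2 : ∫ ω in Aᶜ, ((∑ j ∈ Finset.range q, f N (σ^[r + j * N] ω)) + f r ω) ∂P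
      = (∑ j ∈ Finset.range q, ∫ ω in Aᶜ, f N (σ^[r + j * N] ω) ∂P)
        + ∫ ω in Aᶜ, f r ω ∂P := by
    rw [integral_add (integrable_finset_sum _ (fun j _ => hcompInt _)).integrableOn
      (hint r).integrableOn,
      integral_finset_sum _ (fun j _ => (hcompInt _).integrableOn)]
  -- step 3 + 4 : each term bound
  have s4 : a N + (K : ℝ) * (P A).toReal + tl ≤ (N : ℝ) * (α + ε / 2) := by
    have hKχ : (K : ℝ) * (P A).toReal ≤ ε * N / 8 := by
      have h1 : (K : ℝ) * (P A).toReal ≤ (K : ℝ) * χ :=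
        mul_le_mul_of_nonneg_left hPAr.le (Nat.cast_nonneg K)
      have h2 : (K : ℝ) * χ ≤ ε * N / 8 := by
        rw [hχdef]
        rw [mul_div_assoc']
        rw [div_le_div_iff₀ (by positivity) (by norm_num)]
        have hKn : (0:ℝ) ≤ (K:ℝ) := Nat.cast_nonneg K
        nlinarith
      linarith
    linarith [hK, hNa]
  have s3 : ∀ j ∈ Finset.range q,
      ∫ ω in Aᶜ, f N (σ^[r + j * N] ω) ∂P ≤ (N : ℝ) * (α + ε / 2) := by
    intro j _
    have h := compl_est P (f N) (hint N) (σ^[r + j * N])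
      (hσ.toMeasurePreserving.iterate _) A hAmeas (K : ℝ)
    exact le_trans h s4
  -- step 5
  have s5 : ∫ ω in Aᶜ, f r ω ∂P ≤ B := by
    have h1 : ∫ ω in Aᶜ, f r ω ∂P ≤ ∫ ω, |f r ω| ∂P := by
      calc ∫ ω in Aᶜ, f r ω ∂P ≤ ∫ ω in Aᶜ, |f r ω| ∂P :=
          setIntegral_mono (hint r).integrableOn (hint r).abs.integrableOn
            (fun ω => le_abs_self _)
        _ ≤ ∫ ω, |f r ω| ∂P := setIntegral_le_integral (hint r).abs
            (Filter.Eventually.of_forall fun ω => abs_nonneg _)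
    exact le_trans h1 (Finset.le_sup' (fun r => ∫ ω, |f r ω| ∂P) (Finset.mem_Icc.mpr ⟨hrN, hr2⟩))
  -- combine : sum bound
  have hqN : (q : ℝ) * ((N:ℝ) * (α + ε / 2)) = ((M : ℝ) - (r:ℝ)) * (α + ε / 2) := by
    have : (M : ℝ) = (N:ℝ) * (q:ℝ) + (r:ℝ) := by exact_mod_cast congrArg (Nat.cast (R := ℝ)) hqr
    rw [this]; ring
  have s6 : ∫ ω in Aᶜ, f M ω ∂P ≤ ((M : ℝ) - (r:ℝ)) * (α + ε / 2) + B := by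
    have hsum : (∑ j ∈ Finset.range q, ∫ ω in Aᶜ, f N (σ^[r + j * N] ω) ∂P)
        ≤ (q : ℝ) * ((N:ℝ) * (α + ε / 2)) := by
      have := Finset.sum_le_card_nsmul (Finset.range q)
        (fun j => ∫ ω in Aᶜ, f N (σ^[r + j * N] ω) ∂P) ((N:ℝ) * (α + ε / 2)) s3
      simpa [Finset.card_range, nsmul_eq_mul] using this
    rw [← hqN]
    linarith [s1, s2, s5, hsum]
  -- final arithmetic
  have hfin : ∫ ω in A, f M ω ∂P = a M - ∫ ω in Aᶜ, f M ω ∂P := by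
    have := integral_add_compl hAmeas (hint M)
    rw [hadef]
    linarith
  have hMa : (M : ℝ) * α ≤ a M := hMα M (by omega)
  have hrle : (r : ℝ) ≤ 2 * (N:ℝ) := by exact_mod_cast hr2
  have hrge : (0:ℝ) ≤ (r:ℝ) := Nat.cast_nonneg r
  have habs : -(2 * (N:ℝ) * (|α| + ε)) ≤ (r : ℝ) * (α + ε / 2) := by
    have h1 : -(|α| + ε) ≤ α + ε / 2 := by
      have := neg_abs_le α
      linarith
    nlinarith [abs_nonneg α]
  have hMbig : D < ε * (M:ℝ) / 2 := by
    have h1 : (Nat.ceil (2 * D / ε) + 1 : ℕ) ≤ M := le_trans (le_max_right _ _) hM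
    have h2 : 2 * D / ε < (M : ℝ) := by
      have h3 : (Nat.ceil (2 * D / ε) : ℝ) + 1 ≤ (M:ℝ) := by exact_mod_cast h1
      have h4 := Nat.le_ceil (2 * D / ε)
      linarith
    rw [div_lt_iff₀ hε] at h2
    linarith
  have hkey : (M:ℝ) * α - (((M:ℝ) - (r:ℝ)) * (α + ε / 2))
      = -(ε * (M:ℝ) / 2) + (r:ℝ) * (α + ε / 2) := by ring
  rw [hfin]
  rw [hDdef] at hMbig
  linarith [s6, hMa, hkey, habs, hMbig]
end
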